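/- arXiv:2006.08036 — 6 statements merged into one kernel-verified Lean document; each statement's English description precedes it below -/
import Mathlib

section
/- (Proposition 1(ii), conditional of the multivariate Student's-t.) Let ν > 0, μ ∈ ℝ^p, Σ positive definite, partitioned in blocks according to x = (x1,x2) with dim(x1) = p1, dim(x2) = p2, p1 + p2 = p. Then for all x1 ∈ ℝ^{p1} and x2 ∈ ℝ^{p2}, the joint density factors as t_p((x1,x2)|μ,Σ,ν) = t_{p1}(x1|μ1,Σ11,ν) · t_{p2}(x2|μ_{2.1}, ((ν+δ1)/(ν+p1))·Σ_{22.1}, ν+p1), where μ_{2.1} = μ2 + Σ21 Σ11⁻¹ (x1−μ1), Σ_{22.1} = Σ22 − Σ21 Σ11⁻¹ Σ12 and δ1 = (x1−μ1)ᵀΣ11⁻¹(x1−μ1). In particular the conditional distribution of X2 given X1 = x1 is t_{p2}(μ_{2.1}, ((ν+δ1)/(ν+p1))Σ_{22.1}, ν+p1). -/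
open MeasureTheory Matrix Real Filter

/-- Squared Mahalanobis distance δ(x) = (x−μ)ᵀ S⁻¹ (x−μ). -/
noncomputable def mahalanobis {n : Type*} [Fintype n] [DecidableEq n]
    (μ : n → ℝ) (S : Matrix n n ℝ) (x : n → ℝ) : ℝ :=
  (x - μ) ⬝ᵥ (S⁻¹ *ᵥ (x - μ))

/-- The multivariate Student's-t density t_p(x|μ,S,ν). -/
noncomputable def tPdf {n : Type*} [Fintype n] [DecidableEq n]
    (μ : n → ℝ) (S : Matrix n n ℝ) (ν : ℝ) (x : n → ℝ) : ℝ :=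
  Real.Gamma (((Fintype.card n : ℝ) + ν) / 2) /
      (Real.Gamma (ν / 2) * Real.pi ^ ((Fintype.card n : ℝ) / 2) *
        ν ^ ((Fintype.card n : ℝ) / 2)) *
    S.det ^ (-(1 : ℝ) / 2) *
    (1 + mahalanobis μ S x / ν) ^ (-(((Fintype.card n : ℝ) + ν) / 2))

/-- The multivariate normal density φ_p(x|μ,S). -/
noncomputable def normalPdf {n : Type*} [Fintype n] [DecidableEq n]
    (μ : n → ℝ) (S : Matrix n n ℝ) (x : n → ℝ) : ℝ :=
  (2 * Real.pi) ^ (-(Fintype.card n : ℝ) / 2) * S.det ^ (-(1 : ℝ) / 2) *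
    Real.exp (-(mahalanobis μ S x) / 2)

/-- The Gamma(a,b) density h(u|a,b) (for u > 0). -/
noncomputable def gammaPdf (a b u : ℝ) : ℝ :=
  b ^ a / Real.Gamma a * u ^ (a - 1) * Real.exp (-(b * u))

/-- Standard normal pdf. -/
noncomputable def stdNormalPdf (x : ℝ) : ℝ :=
  (Real.sqrt (2 * Real.pi))⁻¹ * Real.exp (-(x ^ 2) / 2)

/-- Standard normal cdf. -/
noncomputable def stdNormalCdf (x : ℝ) : ℝ :=
  ∫ t in Set.Iic x, stdNormalPdf t

/-- Univariate Student's-t density with location c, scale s², κ degrees of freedom. -/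
noncomputable def tPdf1 (c s2 κ y : ℝ) : ℝ :=
  Real.Gamma ((1 + κ) / 2) /
      (Real.Gamma (κ / 2) * Real.sqrt (Real.pi * κ) * Real.sqrt s2) *
    (1 + (y - c) ^ 2 / (κ * s2)) ^ (-((1 + κ) / 2))

lemma tCond_scalar (ν d1 q dA dK : ℝ) (p1 p2 : ℕ) (hν : 0 < ν)
    (hd1 : 0 ≤ d1) (hq : 0 ≤ q) (hdA : 0 < dA) (hdK : 0 < dK) :
    Real.Gamma (((p1:ℝ)+(p2:ℝ)+ν)/2) /
        (Real.Gamma (ν/2) * Real.pi ^ (((p1:ℝ)+(p2:ℝ))/2) * ν ^ (((p1:ℝ)+(p2:ℝ))/2)) *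
      (dA*dK) ^ (-(1:ℝ)/2) * (1+(d1+q)/ν) ^ (-(((p1:ℝ)+(p2:ℝ)+ν)/2))
    = (Real.Gamma (((p1:ℝ)+ν)/2) /
          (Real.Gamma (ν/2) * Real.pi ^ ((p1:ℝ)/2) * ν ^ ((p1:ℝ)/2)) *
        dA ^ (-(1:ℝ)/2) * (1+d1/ν) ^ (-(((p1:ℝ)+ν)/2))) *
      (Real.Gamma (((p2:ℝ)+(ν+(p1:ℝ)))/2) /
          (Real.Gamma ((ν+(p1:ℝ))/2) * Real.pi ^ ((p2:ℝ)/2) * (ν+(p1:ℝ)) ^ ((p2:ℝ)/2)) *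
        ((((ν+d1)/(ν+(p1:ℝ)))^(p2:ℕ)) * dK) ^ (-(1:ℝ)/2) *
        (1 + (((ν+d1)/(ν+(p1:ℝ)))⁻¹ * q)/(ν+(p1:ℝ))) ^ (-(((p2:ℝ)+(ν+(p1:ℝ)))/2))) := by
  have hπ := Real.pi_pos
  set n1 := (p1:ℝ); set n2 := (p2:ℝ)
  have hn1 : (0:ℝ) ≤ n1 := Nat.cast_nonneg _
  have hn2 : (0:ℝ) ≤ n2 := Nat.cast_nonneg _
  have hA : 0 < ν + d1 := by linarith
  have hB : 0 < ν + (d1 + q) := by linarith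
  have hN : 0 < ν + n1 := by linarith
  have hc : 0 < (ν + d1) / (ν + n1) := div_pos hA hN
  have e1 : 1 + (d1+q)/ν = (ν+(d1+q))/ν := by field_simp
  have e2 : 1 + d1/ν = (ν+d1)/ν := by field_simp
  have e3 : 1 + (((ν+d1)/(ν+n1))⁻¹ * q)/(ν+n1) = (ν+(d1+q))/(ν+d1) := by
    field_simp; ring
  have e4 : (((ν+d1)/(ν+n1)) : ℝ)^(p2:ℕ) = ((ν+d1)/(ν+n1)) ^ (n2 : ℝ) :=
    (Real.rpow_natCast _ p2).symm
  rw [e1, e2, e3, e4]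
  rw [Real.mul_rpow hdA.le hdK.le, Real.mul_rpow (Real.rpow_nonneg hc.le _) hdK.le,
    ← Real.rpow_mul hc.le,
    Real.div_rpow hB.le hν.le, Real.div_rpow hA.le hν.le, Real.div_rpow hB.le hA.le,
    Real.div_rpow hA.le hN.le]
  rw [show ((p1:ℝ)+ν)/2 = (ν+n1)/2 by ring, show ((p2:ℝ)+(ν+n1))/2 = (n1+n2+ν)/2 by ring]
  have hG0 : Real.Gamma (ν/2) ≠ 0 := (Real.Gamma_pos_of_pos (by linarith)).ne'
  have hG1 : Real.Gamma ((ν+n1)/2) ≠ 0 := (Real.Gamma_pos_of_pos (by positivity)).ne'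
  have hG2 : Real.Gamma ((n1+n2+ν)/2) ≠ 0 := (Real.Gamma_pos_of_pos (by positivity)).ne'
  simp only [Real.rpow_def_of_pos hπ, Real.rpow_def_of_pos hν, Real.rpow_def_of_pos hA,
    Real.rpow_def_of_pos hB, Real.rpow_def_of_pos hN, Real.rpow_def_of_pos hdA,
    Real.rpow_def_of_pos hdK]
  have hex : ∀ x : ℝ, Real.exp x ≠ 0 := fun x => (Real.exp_pos x).ne'
  have hg0 : 0 < Real.Gamma (ν/2) := Real.Gamma_pos_of_pos (by linarith)
  have hg1 : 0 < Real.Gamma ((ν+n1)/2) := Real.Gamma_pos_of_pos (by positivity)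
  have hg2 : 0 < Real.Gamma ((n1+n2+ν)/2) := Real.Gamma_pos_of_pos (by positivity)
  apply Real.log_injOn_pos (Set.mem_Ioi.2 (by positivity)) (Set.mem_Ioi.2 (by positivity))
  simp only [Real.log_mul, Real.log_div, Real.log_exp, hex, hG0, hG1, hG2, ne_eq,
    mul_ne_zero_iff, div_ne_zero_iff, not_false_iff, and_self, and_true, true_and]
  ring

/-- Proposition 1(ii): conditional of the multivariate Student's-t. -/
theorem tPdf_conditional {p1 p2 : ℕ} (ν : ℝ) (hν : 0 < ν)
    (μ1 : Fin p1 → ℝ) (μ2 : Fin p2 → ℝ)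
    (S11 : Matrix (Fin p1) (Fin p1) ℝ) (S12 : Matrix (Fin p1) (Fin p2) ℝ)
    (S21 : Matrix (Fin p2) (Fin p1) ℝ) (S22 : Matrix (Fin p2) (Fin p2) ℝ)
    (hS : (Matrix.fromBlocks S11 S12 S21 S22).PosDef)
    (x1 : Fin p1 → ℝ) (x2 : Fin p2 → ℝ) :
    tPdf (Sum.elim μ1 μ2) (Matrix.fromBlocks S11 S12 S21 S22) ν (Sum.elim x1 x2)
      = tPdf μ1 S11 ν x1 *
        tPdf (μ2 + S21 *ᵥ (S11⁻¹ *ᵥ (x1 - μ1)))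
          (((ν + mahalanobis μ1 S11 x1) / (ν + (p1 : ℝ))) • (S22 - S21 * S11⁻¹ * S12))
          (ν + (p1 : ℝ)) x2 := by
  classical
  have hH := hS.1
  obtain ⟨h11, h21, h12, h22⟩ := Matrix.isHermitian_fromBlocks_iff.1 hH
  -- h21 : S12ᴴ = S21
  have hSig : Matrix.fromBlocks S11 S12 S12ᴴ S22 = Matrix.fromBlocks S11 S12 S21 S22 := by
    rw [h21]
  have ht12 : S12ᵀ = S21 := by
    rw [← h21]; ext i j; simp [Matrix.conjTranspose_apply]
  have ht11 : S11ᵀ = S11 := by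
    ext i j
    have e := congrFun (congrFun h11 j) i
    simpa using e.symm
  -- S11 is positive definite
  have hS11 : S11.PosDef := by
    refine Matrix.PosDef.of_dotProduct_mulVec_pos h11 (fun y hy => ?_)
    have hne : Sum.elim y (0 : Fin p2 → ℝ) ≠ 0 := by
      intro h; exact hy (funext fun i => congrFun h (Sum.inl i))
    have := hS.dotProduct_mulVec_pos hne
    simpa [Matrix.fromBlocks_mulVec, sumElim_dotProduct_sumElim,
      Matrix.mulVec_zero] using this
  haveI : Invertible S11 := Matrix.invertibleOfIsUnitDet S11 hS11.det_pos.ne'.isUnit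
  set K := S22 - S21 * S11⁻¹ * S12 with hKdef
  have hKH : K.IsHermitian := by
    have := (Matrix.IsHermitian.fromBlocks₁₁ S12 S22 h11).1 (hSig.symm ▸ hH)
    rwa [h21] at this
  have hK : K.PosDef := by
    refine Matrix.PosDef.of_dotProduct_mulVec_pos hKH (fun y hy => ?_)
    have hne : Sum.elim (-((S11⁻¹ * S12) *ᵥ y)) y ≠ 0 := by
      intro h; exact hy (funext fun i => congrFun h (Sum.inr i))
    have h0 := hS.dotProduct_mulVec_pos hne
    rw [← hSig, Matrix.dotProduct_mulVec,
      Matrix.schur_complement_eq₁₁ S12 S22 (-((S11⁻¹ * S12) *ᵥ y)) y h11,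
      neg_add_cancel] at h0
    rw [Matrix.dotProduct_mulVec, hKdef, ← h21]
    simpa using h0
  haveI : Invertible K := Matrix.invertibleOfIsUnitDet K hK.det_pos.ne'.isUnit
  have hdetS : (Matrix.fromBlocks S11 S12 S21 S22).det = S11.det * K.det := by
    rw [Matrix.det_fromBlocks₁₁, Matrix.invOf_eq_nonsing_inv]
  -- vectors
  set v1 := x1 - μ1 with hv1
  set v2 := x2 - μ2 with hv2
  set w := v2 - S21 *ᵥ (S11⁻¹ *ᵥ v1) with hw
  set z := K⁻¹ *ᵥ w with hz
  set d1 := mahalanobis μ1 S11 x1 with hd1def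
  set q := w ⬝ᵥ (K⁻¹ *ᵥ w) with hqdef
  have hd1' : d1 = v1 ⬝ᵥ S11⁻¹ *ᵥ v1 := rfl
  have hd1 : 0 ≤ d1 := by
    rw [hd1']
    simpa using hS11.inv.posSemidef.dotProduct_mulVec_nonneg v1
  have hq : 0 ≤ q := by
    rw [hqdef]
    simpa using hK.inv.posSemidef.dotProduct_mulVec_nonneg w
  -- decomposition of the full Mahalanobis distance
  set u1 := S11⁻¹ *ᵥ v1 - S11⁻¹ *ᵥ (S12 *ᵥ z) with hu1
  have hmul : (Matrix.fromBlocks S11 S12 S21 S22) *ᵥ (Sum.elim u1 z) = Sum.elim v1 v2 := by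
    rw [Matrix.fromBlocks_mulVec]
    simp only [Sum.elim_comp_inl, Sum.elim_comp_inr]
    have c1 : S11 *ᵥ u1 + S12 *ᵥ z = v1 := by
      rw [hu1, Matrix.mulVec_sub, Matrix.mulVec_mulVec, Matrix.mulVec_mulVec,
        Matrix.mul_nonsing_inv _ hS11.det_pos.ne'.isUnit, Matrix.one_mulVec,
        Matrix.one_mulVec, sub_add_cancel]
    have c2 : S21 *ᵥ u1 + S22 *ᵥ z = v2 := by
      have hKz : K *ᵥ z = w := by
        rw [hz, Matrix.mulVec_mulVec, Matrix.mul_nonsing_inv _ hK.det_pos.ne'.isUnit,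
          Matrix.one_mulVec]
      have hexp : S22 *ᵥ z - S21 *ᵥ (S11⁻¹ *ᵥ (S12 *ᵥ z)) = w := by
        rw [hKdef, Matrix.sub_mulVec] at hKz
        simpa [Matrix.mulVec_mulVec, Matrix.mul_assoc] using hKz
      rw [hw] at hexp
      rw [hu1, Matrix.mulVec_sub]
      funext i
      have h1 := congrFun hexp i
      simp only [Pi.sub_apply, Pi.add_apply] at h1 ⊢
      linarith
    rw [c1, c2]
  have hinv : (Matrix.fromBlocks S11 S12 S21 S22)⁻¹ *ᵥ (Sum.elim v1 v2) = Sum.elim u1 z := by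
    rw [← hmul, Matrix.mulVec_mulVec, Matrix.nonsing_inv_mul _ hS.det_pos.ne'.isUnit,
      Matrix.one_mulVec]
  have hsub : Sum.elim x1 x2 - Sum.elim μ1 μ2 = Sum.elim v1 v2 := by
    funext i; cases i <;> simp [hv1, hv2]
  have hcross : v1 ⬝ᵥ (S11⁻¹ *ᵥ (S12 *ᵥ z)) = (S21 *ᵥ (S11⁻¹ *ᵥ v1)) ⬝ᵥ z := by
    rw [Matrix.mulVec_mulVec, Matrix.dotProduct_mulVec, ← Matrix.mulVec_transpose,
      Matrix.transpose_mul, Matrix.transpose_nonsing_inv, ht11, ht12,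
      ← Matrix.mulVec_mulVec]
  have hmahal : mahalanobis (Sum.elim μ1 μ2) (Matrix.fromBlocks S11 S12 S21 S22)
      (Sum.elim x1 x2) = d1 + q := by
    unfold mahalanobis
    rw [hsub, hinv, sumElim_dotProduct_sumElim, hu1, dotProduct_sub, hcross,
      hd1', hqdef, ← hz, hw]
    simp only [sub_dotProduct, add_dotProduct, neg_dotProduct,
      dotProduct_sub, dotProduct_add, dotProduct_neg, sub_eq_add_neg]
    ring
  -- the conditional scale matrix
  set c := (ν + d1) / (ν + (p1:ℝ)) with hcdef
  have hN : 0 < ν + (p1:ℝ) := by positivity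
  have hcpos : 0 < c := div_pos (by linarith) hN
  haveI : Invertible c := invertibleOfNonzero hcpos.ne'
  have hdet2 : (c • K).det = c ^ p2 * K.det := by
    rw [Matrix.det_smul]; simp
  have hsmul_inv : (c • K)⁻¹ = c⁻¹ • K⁻¹ := by
    rw [Matrix.inv_smul (A := K) (k := c) hK.det_pos.ne'.isUnit, invOf_eq_inv]
  have hveq : x2 - (μ2 + S21 *ᵥ (S11⁻¹ *ᵥ v1)) = w := by
    rw [sub_add_eq_sub_sub]
  have hmahal2 : mahalanobis (μ2 + S21 *ᵥ (S11⁻¹ *ᵥ v1)) (c • K) x2 = c⁻¹ * q := by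
    unfold mahalanobis
    rw [hveq, hsmul_inv, Matrix.smul_mulVec, dotProduct_smul, smul_eq_mul, hqdef]
  unfold tPdf
  rw [hmahal, hmahal2, hdetS, hdet2]
  simp only [Fintype.card_sum, Fintype.card_fin, Nat.cast_add]
  exact tCond_scalar ν d1 q S11.det K.det p1 p2 hν hd1 hq hS11.det_pos hK.det_pos
end

section
/- (Pointwise tilting identity underlying Proposition 3.) Let ν > 0, μ ∈ ℝ^p, Σ positive definite, and let r ∈ ℝ satisfy ν + 2r > 0. Then for every x ∈ ℝ^p, ((ν+p)/(ν+δ(x)))^r · t_p(x|μ,Σ,ν) = c_p(ν,r) · t_p(x|μ, Σ*, ν+2r), where Σ* = νΣ/(ν+2r) and c_p(ν,r) = ((ν+p)/ν)^r · Γ((p+ν)/2)Γ((ν+2r)/2) / (Γ(ν/2)Γ((p+ν+2r)/2)). -/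
open MeasureTheory Matrix Real Filter

/-- pointwise tilting identity underlying Proposition 3. -/
theorem tPdf_tilting {p : ℕ} (ν r : ℝ) (hν : 0 < ν) (hr : 0 < ν + 2 * r)
    (μ : Fin p → ℝ) (S : Matrix (Fin p) (Fin p) ℝ) (hS : S.PosDef)
    (x : Fin p → ℝ) :
    ((ν + (p : ℝ)) / (ν + mahalanobis μ S x)) ^ r * tPdf μ S ν x
      = ((ν + (p : ℝ)) / ν) ^ r *
          (Real.Gamma (((p : ℝ) + ν) / 2) * Real.Gamma ((ν + 2 * r) / 2) /
            (Real.Gamma (ν / 2) * Real.Gamma (((p : ℝ) + ν + 2 * r) / 2))) *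
        tPdf μ ((ν / (ν + 2 * r)) • S) (ν + 2 * r) x := by
  set P : ℝ := (p : ℝ) with hP
  set ν' : ℝ := ν + 2 * r with hν'def
  have hν' : 0 < ν' := hr
  set d : ℝ := mahalanobis μ S x with hd
  have hdet : 0 < S.det := hS.det_pos
  have hd0 : 0 ≤ d := by
    have h := hS.inv.posSemidef.dotProduct_mulVec_nonneg (x - μ)
    rw [star_trivial] at h
    exact h
  have hc : 0 < ν / ν' := div_pos hν hν'
  have hA : 0 < 1 + d / ν := by positivity
  -- Mahalanobis for the scaled matrix
  have hSdet : IsUnit S.det := isUnit_iff_ne_zero.mpr hdet.ne'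
  haveI : Invertible (ν / ν') := invertibleOfNonzero hc.ne'
  have key1 : mahalanobis μ ((ν / ν') • S) x = (ν' / ν) * d := by
    rw [mahalanobis, S.inv_smul (ν / ν') hSdet]
    rw [invOf_eq_inv _, inv_div]
    simp [smul_mulVec, dotProduct_smul, mahalanobis, smul_eq_mul, hd]
  have key2 : ((ν / ν') • S).det = (ν / ν') ^ p * S.det := by
    simp [Matrix.det_smul]
  have key3 : 1 + (ν' / ν * d) / ν' = 1 + d / ν := by
    field_simp
  have hAne : (1 : ℝ) + d / ν ≠ 0 := hA.ne'
  have key4 : (ν + P) / (ν + d) = (ν + P) / ν * (1 + d / ν)⁻¹ := by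
    have hνd : ν + d ≠ 0 := by positivity
    field_simp
  unfold tPdf
  simp only [Fintype.card_fin, ← hP, ← hd, key1, key2, key3, ← hν'def]
  have hGG : Real.Gamma ((P + ν') / 2) = Real.Gamma ((P + ν + 2 * r) / 2) := by
    rw [hν'def]; ring_nf
  have hArpow : (1 + d / ν) ^ (-((P + ν') / 2)) =
      (1 + d / ν) ^ (-((P + ν) / 2)) * (1 + d / ν) ^ (-r) := by
    rw [← Real.rpow_add hA]
    congr 1
    rw [hν'def]; ring
  have hdet2 : ((ν / ν') ^ p * S.det) ^ (-(1:ℝ) / 2) =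
      ν' ^ (P / 2) / ν ^ (P / 2) * S.det ^ (-(1:ℝ) / 2) := by
    rw [Real.mul_rpow (by positivity) hdet.le, ← Real.rpow_natCast (ν / ν') p,
      ← Real.rpow_mul hc.le]
    congr 1
    rw [show ((p : ℝ) * (-(1:ℝ) / 2)) = -(P / 2) by rw [hP]; ring,
      Real.rpow_neg hc.le, Real.div_rpow hν.le hν'.le, inv_div]
  rw [key4, Real.mul_rpow (by positivity) (by positivity),
    Real.inv_rpow hA.le, ← Real.rpow_neg hA.le, hGG, hArpow, hdet2]
  have h1 : Real.Gamma (ν / 2) ≠ 0 := (Real.Gamma_pos_of_pos (by positivity)).ne'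
  have h2 : Real.Gamma (ν' / 2) ≠ 0 := (Real.Gamma_pos_of_pos (by positivity)).ne'
  have h3 : Real.Gamma ((P + ν + 2 * r) / 2) ≠ 0 := by
    refine (Real.Gamma_pos_of_pos ?_).ne'
    have : 0 ≤ P := by rw [hP]; positivity
    linarith
  have h4 : (Real.pi : ℝ) ^ (P / 2) ≠ 0 := by positivity
  have h5 : ν ^ (P / 2) ≠ 0 := by positivity
  have h6 : ν' ^ (P / 2) ≠ 0 := by positivity
  field_simp
  ring_nf
  have h3' : Real.Gamma (ν * (1 / 2) + P * (1 / 2) + r) ≠ 0 := by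
    convert h3 using 2; ring
  rw [mul_assoc, mul_inv_cancel₀ h3', mul_one]
end

section
/- (Proposition 3, weighted moments of the truncated multivariate Student's-t.) Let ν > 0, μ ∈ ℝ^p, Σ positive definite, r ∈ ℝ with ν + 2r > 0, and set Σ* = νΣ/(ν+2r) and c_p(ν,r) = ((ν+p)/ν)^r · Γ((p+ν)/2)Γ((ν+2r)/2)/(Γ(ν/2)Γ((p+ν+2r)/2)). Then for every Borel set A ⊆ ℝ^p and every Borel function f : ℝ^p → ℝ such that f(·)·t_p(·|μ,Σ*,ν+2r) is integrable on A, ∫_A ((ν+p)/(ν+δ(x)))^r f(x) t_p(x|μ,Σ,ν) dx = c_p(ν,r) · ∫_A f(x) t_p(x|μ,Σ*,ν+2r) dx. In particular, taking A = {x : a ≤ x ≤ b} a rectangle and f(x) equal to 1, the coordinates of x, or products of pairs of coordinates of x, one obtains: if Y ∼ t_p(μ,Σ,ν) truncated to (a,b), then E[((ν+p)/(ν+δ(Y)))^r Y^{(k)}] = c_p(ν,r) · (T_p(a,b;μ,Σ*,ν+2r)/T_p(a,b;μ,Σ,ν)) · E[W^{(k)}] for k = 0,1,2, where W ∼ t_p(μ,Σ*,ν+2r)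 truncated to (a,b). -/
open MeasureTheory Matrix Real Filter

/-- Proposition 3: weighted moments of the truncated multivariate Student's-t. -/
theorem tPdf_weighted_moments {p : ℕ} (ν r : ℝ) (hν : 0 < ν) (hr : 0 < ν + 2 * r)
    (μ : Fin p → ℝ) (S : Matrix (Fin p) (Fin p) ℝ) (hS : S.PosDef)
    (A : Set (Fin p → ℝ)) (hA : MeasurableSet A)
    (f : (Fin p → ℝ) → ℝ) (hfm : Measurable f)
    (hfi : IntegrableOn (fun x => f x * tPdf μ ((ν / (ν + 2 * r)) • S) (ν + 2 * r) x) A) :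
    ∫ x in A, ((ν + (p : ℝ)) / (ν + mahalanobis μ S x)) ^ r * f x * tPdf μ S ν x
      = ((ν + (p : ℝ)) / ν) ^ r *
          (Real.Gamma (((p : ℝ) + ν) / 2) * Real.Gamma ((ν + 2 * r) / 2) /
            (Real.Gamma (ν / 2) * Real.Gamma (((p : ℝ) + ν + 2 * r) / 2))) *
        ∫ x in A, f x * tPdf μ ((ν / (ν + 2 * r)) • S) (ν + 2 * r) x := by
  set C : ℝ := ((ν + (p : ℝ)) / ν) ^ r *
      (Real.Gamma (((p : ℝ) + ν) / 2) * Real.Gamma ((ν + 2 * r) / 2) /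
        (Real.Gamma (ν / 2) * Real.Gamma (((p : ℝ) + ν + 2 * r) / 2))) with hC
  have hc0 : (0:ℝ) < ν / (ν + 2 * r) := div_pos hν hr
  have hdS : (0:ℝ) < S.det := hS.det_pos
  have hνp : (0:ℝ) < ν + (p:ℝ) := by positivity
  -- inverse of scaled matrix
  have hinv : ((ν / (ν + 2 * r)) • S)⁻¹ = (ν / (ν + 2 * r))⁻¹ • S⁻¹ := by
    haveI := invertibleOfNonzero hc0.ne'
    have h1 := Matrix.inv_smul (A := S) (ν / (ν + 2 * r)) (isUnit_iff_ne_zero.2 hdS.ne')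
    rwa [invOf_eq_inv _] at h1
  have key : ∀ x ∈ A,
      ((ν + (p : ℝ)) / (ν + mahalanobis μ S x)) ^ r * f x * tPdf μ S ν x
        = C * (f x * tPdf μ ((ν / (ν + 2 * r)) • S) (ν + 2 * r) x) := by
    intro x _
    have hd : (0:ℝ) ≤ mahalanobis μ S x := by
      have := hS.inv.posSemidef.dotProduct_mulVec_nonneg (x - μ)
      simpa [mahalanobis] using this
    have hmah : mahalanobis μ ((ν / (ν + 2 * r)) • S) x
        = (ν + 2 * r) / ν * mahalanobis μ S x := by
      unfold mahalanobis
      rw [hinv, inv_div, Matrix.smul_mulVec, dotProduct_smul, smul_eq_mul]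
    set d := mahalanobis μ S x with hdd
    set t : ℝ := 1 + d / ν with ht'
    have ht : (0:ℝ) < t := by
      have := div_nonneg hd hν.le
      rw [ht']; linarith
    have hνd : ν + d = ν * t := by rw [ht', mul_add, mul_one, mul_div_cancel₀ _ hν.ne']
    have harg : 1 + mahalanobis μ ((ν / (ν + 2 * r)) • S) x / (ν + 2 * r) = t := by
      rw [hmah, ht']; field_simp
    have hdet : (((ν / (ν + 2 * r)) • S).det : ℝ) ^ (-(1:ℝ)/2)
        = (ν + 2 * r) ^ ((p:ℝ)/2) / ν ^ ((p:ℝ)/2) * S.det ^ (-(1:ℝ)/2) := by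
      rw [Matrix.det_smul, Fintype.card_fin,
        Real.mul_rpow (pow_nonneg hc0.le _) hdS.le,
        ← Real.rpow_natCast (ν / (ν + 2 * r)) p, ← Real.rpow_mul hc0.le,
        show ((p:ℝ) * (-1/2)) = -((p:ℝ)/2) by ring,
        Real.rpow_neg hc0.le, Real.div_rpow hν.le hr.le, inv_div]
    -- weight factor
    have hw : ((ν + (p:ℝ)) / (ν + d)) ^ r = ((ν + (p:ℝ)) / ν) ^ r * t ^ (-r) := by
      rw [hνd, show (ν + (p:ℝ)) / (ν * t) = ((ν + (p:ℝ)) / ν) / t from (div_div _ _ _).symm,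
        Real.div_rpow (by positivity) ht.le, Real.rpow_neg ht.le, div_eq_mul_inv]
    have hT : t ^ (-r) * t ^ (-(((p:ℝ) + ν) / 2)) = t ^ (-(((p:ℝ) + ν + 2 * r) / 2)) := by
      rw [← Real.rpow_add ht]; congr 1; ring
    have hG1 : (0:ℝ) < Real.Gamma (ν / 2) := Real.Gamma_pos_of_pos (by linarith)
    have hG2 : (0:ℝ) < Real.Gamma ((ν + 2 * r) / 2) := Real.Gamma_pos_of_pos (by linarith)
    have hG3 : (0:ℝ) < Real.Gamma (((p:ℝ) + ν) / 2) := Real.Gamma_pos_of_pos (by have : (0:ℝ) ≤ (p:ℝ) := Nat.cast_nonneg p; linarith)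
    have hG4 : (0:ℝ) < Real.Gamma (((p:ℝ) + ν + 2 * r) / 2) := Real.Gamma_pos_of_pos (by have : (0:ℝ) ≤ (p:ℝ) := Nat.cast_nonneg p; linarith)
    have hP : (0:ℝ) < Real.pi ^ ((p:ℝ)/2) := Real.rpow_pos_of_pos Real.pi_pos _
    have hNν : (0:ℝ) < ν ^ ((p:ℝ)/2) := Real.rpow_pos_of_pos hν _
    have hNs : (0:ℝ) < (ν + 2 * r) ^ ((p:ℝ)/2) := Real.rpow_pos_of_pos hr _
    unfold tPdf
    rw [Fintype.card_fin, harg, hdet, hw, hC, ← hdd, ← ht',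
      show ((p:ℝ) + (ν + 2 * r)) = ((p:ℝ) + ν + 2 * r) from (add_assoc _ _ _).symm, ← hT]
    field_simp
    ring_nf
    rw [mul_assoc, mul_assoc, mul_assoc, mul_assoc, mul_assoc]
    ring_nf at hG2 hG4 hNs
    field_simp
  rw [setIntegral_congr_fun hA key, MeasureTheory.integral_const_mul]
end

section
/- (Pointwise identity underlying Proposition 4.) Let ν > 0, μ ∈ ℝ^p, Σ positive definite and partitioned conformably with x = (x1,x2), p1 + p2 = p, and let r ∈ ℝ satisfy ν + p1 + 2r > 0. Fix x1 ∈ ℝ^{p1} and set δ1 = (x1−μ1)ᵀΣ11⁻¹(x1−μ1), μ_{2.1} = μ2 + Σ21Σ11⁻¹(x1−μ1), Σ_{22.1} = Σ22 − Σ21Σ11⁻¹Σ12, Σ̃_{22.1} = ((ν+δ1)/(ν+p1))Σ_{22.1} and Σ̃*_{22.1} = ((ν+δ1)/(ν+2r+p1))Σ_{22.1}. Then for every x2 ∈ ℝ^{p2}, ((ν+p)/(ν+δ(x)))^r · t_{p2}(x2|μ_{2.1}, Σ̃_{22.1}, ν+p1) = (d_p(p1,ν,r)/(ν+δ1)^r)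 · t_{p2}(x2|μ_{2.1}, Σ̃*_{22.1}, ν+p1+2r), where δ(x) = (x−μ)ᵀΣ⁻¹(x−μ) and d_p(p1,ν,r) = (ν+p)^r · Γ((p+ν)/2)Γ((p1+ν+2r)/2)/(Γ((p1+ν)/2)Γ((p+ν+2r)/2)). -/
open MeasureTheory Matrix Real Filter

/-! Auxiliary lemmas -/

theorem aux_posDef_block11 {p1 p2 : ℕ} {S11 : Matrix (Fin p1) (Fin p1) ℝ}
    {S12 : Matrix (Fin p1) (Fin p2) ℝ} {S21 : Matrix (Fin p2) (Fin p1) ℝ}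
    {S22 : Matrix (Fin p2) (Fin p2) ℝ}
    (hS : (Matrix.fromBlocks S11 S12 S21 S22).PosDef) : S11.PosDef := by
  obtain ⟨h1, h2⟩ := posDef_iff_dotProduct_mulVec.mp hS
  rw [isHermitian_fromBlocks_iff] at h1
  refine posDef_iff_dotProduct_mulVec.mpr ⟨h1.1, fun x hx => ?_⟩
  have hne : Sum.elim x (0 : Fin p2 → ℝ) ≠ 0 := by
    intro h; exact hx (funext fun i => congrFun h (Sum.inl i))
  have := h2 hne
  simpa [fromBlocks_mulVec, sumElim_dotProduct_sumElim] using this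

theorem aux_trans21 {p1 p2 : ℕ} {S11 : Matrix (Fin p1) (Fin p1) ℝ}
    {S12 : Matrix (Fin p1) (Fin p2) ℝ} {S21 : Matrix (Fin p2) (Fin p1) ℝ}
    {S22 : Matrix (Fin p2) (Fin p2) ℝ}
    (hS : (Matrix.fromBlocks S11 S12 S21 S22).PosDef) : S12ᵀ = S21 := by
  have h1 := hS.1
  rw [isHermitian_fromBlocks_iff] at h1
  simpa using h1.2.1

theorem aux_posDef_schur {p1 p2 : ℕ} {S11 : Matrix (Fin p1) (Fin p1) ℝ}
    {S12 : Matrix (Fin p1) (Fin p2) ℝ} {S21 : Matrix (Fin p2) (Fin p1) ℝ}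
    {S22 : Matrix (Fin p2) (Fin p2) ℝ}
    (hS : (Matrix.fromBlocks S11 S12 S21 S22).PosDef) :
    (S22 - S21 * S11⁻¹ * S12).PosDef := by
  have h11 := aux_posDef_block11 hS
  have ht := aux_trans21 hS
  haveI : Invertible S11 := S11.invertibleOfIsUnitDet (isUnit_iff_ne_zero.mpr h11.det_pos.ne')
  have h22 : S22.IsHermitian := by
    have h1 := hS.1; rw [isHermitian_fromBlocks_iff] at h1; exact h1.2.2.2
  have hherm : (S22 - S21 * S11⁻¹ * S12).IsHermitian := by
    refine h22.sub ?_
    have : S21 * S11⁻¹ * S12 = S12ᴴ * S11⁻¹ * S12 := by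
      rw [conjTranspose_eq_transpose_of_trivial, ht]
    rw [this]
    exact isHermitian_conjTranspose_mul_mul S12 h11.isHermitian.inv
  refine posDef_iff_dotProduct_mulVec.mpr ⟨hherm, fun y hy => ?_⟩
  have key := Matrix.schur_complement_eq₁₁ (α := ℝ) S12 S22 (-((S11⁻¹ * S12) *ᵥ y)) y
    h11.isHermitian
  have hfb : (fromBlocks S11 S12 S12ᴴ S22) = fromBlocks S11 S12 S21 S22 := by
    rw [conjTranspose_eq_transpose_of_trivial, ht]
  rw [hfb] at key
  have hne : (Sum.elim (-((S11⁻¹ * S12) *ᵥ y)) y) ≠ 0 := by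
    intro h; exact hy (funext fun i => congrFun h (Sum.inr i))
  have hpos := hS.dotProduct_mulVec_pos hne
  simp only [star_trivial, dotProduct_mulVec] at hpos key ⊢
  rw [key] at hpos
  simp only [neg_add_cancel] at hpos
  have hB : S12ᴴ = S12ᵀ := conjTranspose_eq_transpose_of_trivial _
  rw [hB, ht] at hpos
  simpa using hpos

theorem aux_maha_decomp {p1 p2 : ℕ} {S11 : Matrix (Fin p1) (Fin p1) ℝ}
    {S12 : Matrix (Fin p1) (Fin p2) ℝ} {S21 : Matrix (Fin p2) (Fin p1) ℝ}
    {S22 : Matrix (Fin p2) (Fin p2) ℝ}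
    (hS : (Matrix.fromBlocks S11 S12 S21 S22).PosDef)
    (h11 : S11.PosDef) (hC : (S22 - S21 * S11⁻¹ * S12).PosDef) (ht : S12ᵀ = S21)
    (μ1 x1 : Fin p1 → ℝ) (μ2 x2 : Fin p2 → ℝ) :
    mahalanobis (Sum.elim μ1 μ2) (Matrix.fromBlocks S11 S12 S21 S22) (Sum.elim x1 x2)
      = mahalanobis μ1 S11 x1
        + mahalanobis (μ2 + S21 *ᵥ (S11⁻¹ *ᵥ (x1 - μ1))) (S22 - S21 * S11⁻¹ * S12) x2 := by
  have h11inv : S11 * S11⁻¹ = 1 := Matrix.mul_nonsing_inv _ (isUnit_iff_ne_zero.mpr h11.det_pos.ne')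
  have h11sym : S11ᵀ = S11 := by
    rw [← conjTranspose_eq_transpose_of_trivial]; exact h11.isHermitian.eq
  have h11t : (S11⁻¹)ᵀ = S11⁻¹ := by rw [Matrix.transpose_nonsing_inv, h11sym]
  have hCinv : (S22 - S21 * S11⁻¹ * S12) * (S22 - S21 * S11⁻¹ * S12)⁻¹ = 1 :=
    Matrix.mul_nonsing_inv _ (isUnit_iff_ne_zero.mpr hC.det_pos.ne')
  have main : ∀ (u1 : Fin p1 → ℝ) (u2 : Fin p2 → ℝ),
      Sum.elim u1 u2 ⬝ᵥ ((fromBlocks S11 S12 S21 S22)⁻¹ *ᵥ Sum.elim u1 u2)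
        = u1 ⬝ᵥ (S11⁻¹ *ᵥ u1)
          + (u2 - S21 *ᵥ (S11⁻¹ *ᵥ u1)) ⬝ᵥ ((S22 - S21 * S11⁻¹ * S12)⁻¹ *ᵥ
              (u2 - S21 *ᵥ (S11⁻¹ *ᵥ u1))) := by
    intro u1 u2
    set C := S22 - S21 * S11⁻¹ * S12 with hCdef
    obtain ⟨w, hw⟩ : ∃ w, w = u2 - S21 *ᵥ (S11⁻¹ *ᵥ u1) := ⟨_, rfl⟩
    obtain ⟨y, hy⟩ : ∃ y, y = C⁻¹ *ᵥ w := ⟨_, rfl⟩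
    obtain ⟨z, hz⟩ : ∃ z, z = S11⁻¹ *ᵥ u1 - (S11⁻¹ * S12) *ᵥ y := ⟨_, rfl⟩
    have htop : S11 *ᵥ z + S12 *ᵥ y = u1 := by
      rw [hz, Matrix.mulVec_sub, Matrix.mulVec_mulVec, Matrix.mulVec_mulVec,
        ← Matrix.mul_assoc, h11inv, Matrix.one_mul, Matrix.one_mulVec]
      abel
    have hCy : C *ᵥ y = w := by rw [hy, Matrix.mulVec_mulVec, hCinv, Matrix.one_mulVec]
    have hbot : S21 *ᵥ z + S22 *ᵥ y = u2 := by
      rw [hz, Matrix.mulVec_sub, Matrix.mulVec_mulVec, Matrix.mulVec_mulVec, ← Matrix.mul_assoc]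
      have expand : (S21 * S11⁻¹) *ᵥ u1 - (S21 * S11⁻¹ * S12) *ᵥ y + S22 *ᵥ y
          = (S21 * S11⁻¹) *ᵥ u1 + C *ᵥ y := by
        rw [hCdef, Matrix.sub_mulVec]; abel
      rw [expand, hCy, hw, ← Matrix.mulVec_mulVec]
      abel
    have hmul : fromBlocks S11 S12 S21 S22 *ᵥ Sum.elim z y = Sum.elim u1 u2 := by
      rw [fromBlocks_mulVec, Sum.elim_comp_inl, Sum.elim_comp_inr, htop, hbot]
    have hinvv : (fromBlocks S11 S12 S21 S22)⁻¹ *ᵥ Sum.elim u1 u2 = Sum.elim z y := by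
      rw [← hmul, Matrix.mulVec_mulVec,
        Matrix.nonsing_inv_mul _ (isUnit_iff_ne_zero.mpr hS.det_pos.ne'), Matrix.one_mulVec]
    have hcross : u1 ⬝ᵥ ((S11⁻¹ * S12) *ᵥ y) = (S21 *ᵥ (S11⁻¹ *ᵥ u1)) ⬝ᵥ y := by
      rw [Matrix.dotProduct_mulVec, ← Matrix.mulVec_transpose, Matrix.transpose_mul, h11t, ht,
        ← Matrix.mulVec_mulVec]
    rw [hinvv, sumElim_dotProduct_sumElim, ← hw, ← hy]
    rw [hz, dotProduct_sub, hcross]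
    have hu2 : u2 ⬝ᵥ y = w ⬝ᵥ y + (S21 *ᵥ (S11⁻¹ *ᵥ u1)) ⬝ᵥ y := by
      rw [hw, sub_dotProduct]; abel
    rw [hu2]; ring
  have hsub : Sum.elim x1 x2 - Sum.elim μ1 μ2 = Sum.elim (x1 - μ1) (x2 - μ2) := by
    funext i; cases i <;> simp
  have hx2 : x2 - (μ2 + S21 *ᵥ (S11⁻¹ *ᵥ (x1 - μ1)))
      = (x2 - μ2) - S21 *ᵥ (S11⁻¹ *ᵥ (x1 - μ1)) := by abel
  rw [mahalanobis, mahalanobis, mahalanobis, hsub, hx2, main]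

theorem aux_maha_smul {n : Type*} [Fintype n] [DecidableEq n] (μ : n → ℝ) {S : Matrix n n ℝ}
    (hS : IsUnit S.det) {c : ℝ} (hc : c ≠ 0) (x : n → ℝ) :
    mahalanobis μ (c • S) x = c⁻¹ * mahalanobis μ S x := by
  haveI : Invertible c := invertibleOfNonzero hc
  rw [mahalanobis, mahalanobis, Matrix.inv_smul (A := S) c hS, invOf_eq_inv,
    Matrix.smul_mulVec, dotProduct_smul, smul_eq_mul]

theorem aux_scalar_key (p2 : ℕ) (r a b k1 k2 P dC g1 g2 g3 g4 : ℝ)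
    (ha : 0 < a) (hb : 0 < b) (hk1 : 0 < k1) (hk2 : 0 < k2) (hP : 0 < P) (hdC : 0 < dC)
    (hg1 : 0 < g1) (hg2 : 0 < g2) (hg3 : 0 < g3) (hg4 : 0 < g4) (hk : k2 = k1 + 2 * r) :
    (P / b) ^ r * (g1 / (g2 * Real.pi ^ ((p2:ℝ) / 2) * k1 ^ ((p2:ℝ) / 2)) *
        ((a / k1) ^ p2 * dC) ^ (-(1:ℝ) / 2) * (b / a) ^ (-(((p2:ℝ) + k1) / 2)))
      = P ^ r * (g1 * g4 / (g2 * g3)) / a ^ r *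
        (g3 / (g4 * Real.pi ^ ((p2:ℝ) / 2) * k2 ^ ((p2:ℝ) / 2)) *
          ((a / k2) ^ p2 * dC) ^ (-(1:ℝ) / 2) * (b / a) ^ (-(((p2:ℝ) + k2) / 2))) := by
  subst hk
  obtain ⟨A, rfl⟩ : ∃ x, a = Real.exp x := ⟨Real.log a, (Real.exp_log ha).symm⟩
  obtain ⟨B, rfl⟩ : ∃ x, b = Real.exp x := ⟨Real.log b, (Real.exp_log hb).symm⟩
  obtain ⟨K1, hK1⟩ : ∃ x, k1 = Real.exp x := ⟨Real.log k1, (Real.exp_log hk1).symm⟩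
  obtain ⟨Pv, rfl⟩ : ∃ x, P = Real.exp x := ⟨Real.log P, (Real.exp_log hP).symm⟩
  obtain ⟨D, rfl⟩ : ∃ x, dC = Real.exp x := ⟨Real.log dC, (Real.exp_log hdC).symm⟩
  obtain ⟨G1, rfl⟩ : ∃ x, g1 = Real.exp x := ⟨Real.log g1, (Real.exp_log hg1).symm⟩
  obtain ⟨G2, rfl⟩ : ∃ x, g2 = Real.exp x := ⟨Real.log g2, (Real.exp_log hg2).symm⟩
  obtain ⟨G3, rfl⟩ : ∃ x, g3 = Real.exp x := ⟨Real.log g3, (Real.exp_log hg3).symm⟩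
  obtain ⟨G4, rfl⟩ : ∃ x, g4 = Real.exp x := ⟨Real.log g4, (Real.exp_log hg4).symm⟩
  obtain ⟨K2, hK2⟩ : ∃ x, k1 + 2*r = Real.exp x := ⟨Real.log _, (Real.exp_log hk2).symm⟩
  rw [show Real.pi = Real.exp (Real.log Real.pi) from (Real.exp_log Real.pi_pos).symm]
  rw [hK2, hK1]
  have hrel : Real.exp K2 = Real.exp K1 + 2 * r := by rw [← hK1, ← hK2]
  have h1 : 0 < (Real.exp Pv / Real.exp B) ^ r *
      (Real.exp G1 / (Real.exp G2 * Real.exp (Real.log Real.pi) ^ ((p2:ℝ) / 2) *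
          Real.exp K1 ^ ((p2:ℝ) / 2)) *
        ((Real.exp A / Real.exp K1) ^ p2 * Real.exp D) ^ (-(1:ℝ) / 2) *
        (Real.exp B / Real.exp A) ^ (-(((p2:ℝ) + Real.exp K1) / 2))) := by positivity
  have h2 : 0 < Real.exp Pv ^ r * (Real.exp G1 * Real.exp G4 / (Real.exp G2 * Real.exp G3)) /
        Real.exp A ^ r *
      (Real.exp G3 / (Real.exp G4 * Real.exp (Real.log Real.pi) ^ ((p2:ℝ) / 2) *
          Real.exp K2 ^ ((p2:ℝ) / 2)) *
        ((Real.exp A / Real.exp K2) ^ p2 * Real.exp D) ^ (-(1:ℝ) / 2) *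
        (Real.exp B / Real.exp A) ^ (-(((p2:ℝ) + Real.exp K2) / 2))) := by positivity
  rw [← Real.exp_log h1, ← Real.exp_log h2]
  congr 1
  simp (disch := positivity) only [Real.log_mul, Real.log_div, Real.log_rpow, Real.log_pow,
    Real.log_exp]
  ring_nf
  linear_combination ((B - A) / 2) * hrel

/-- pointwise identity underlying Proposition 4. -/
theorem tPdf_conditional_tilting {p1 p2 : ℕ} (ν r : ℝ) (hν : 0 < ν)
    (hr : 0 < ν + (p1 : ℝ) + 2 * r)
    (μ1 : Fin p1 → ℝ) (μ2 : Fin p2 → ℝ)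
    (S11 : Matrix (Fin p1) (Fin p1) ℝ) (S12 : Matrix (Fin p1) (Fin p2) ℝ)
    (S21 : Matrix (Fin p2) (Fin p1) ℝ) (S22 : Matrix (Fin p2) (Fin p2) ℝ)
    (hS : (Matrix.fromBlocks S11 S12 S21 S22).PosDef)
    (x1 : Fin p1 → ℝ) (x2 : Fin p2 → ℝ) :
    ((ν + ((p1 : ℝ) + (p2 : ℝ))) /
          (ν + mahalanobis (Sum.elim μ1 μ2) (Matrix.fromBlocks S11 S12 S21 S22)
            (Sum.elim x1 x2))) ^ r *
        tPdf (μ2 + S21 *ᵥ (S11⁻¹ *ᵥ (x1 - μ1)))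
          (((ν + mahalanobis μ1 S11 x1) / (ν + (p1 : ℝ))) • (S22 - S21 * S11⁻¹ * S12))
          (ν + (p1 : ℝ)) x2
      = ((ν + ((p1 : ℝ) + (p2 : ℝ))) ^ r *
            (Real.Gamma ((((p1 : ℝ) + (p2 : ℝ)) + ν) / 2) *
              Real.Gamma (((p1 : ℝ) + ν + 2 * r) / 2) /
              (Real.Gamma (((p1 : ℝ) + ν) / 2) *
                Real.Gamma ((((p1 : ℝ) + (p2 : ℝ)) + ν + 2 * r) / 2))) /
          (ν + mahalanobis μ1 S11 x1) ^ r) *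
        tPdf (μ2 + S21 *ᵥ (S11⁻¹ *ᵥ (x1 - μ1)))
          (((ν + mahalanobis μ1 S11 x1) / (ν + 2 * r + (p1 : ℝ))) • (S22 - S21 * S11⁻¹ * S12))
          (ν + (p1 : ℝ) + 2 * r) x2 := by
  have h11 := aux_posDef_block11 hS
  have hC := aux_posDef_schur hS
  have ht := aux_trans21 hS
  have hk1 : (0:ℝ) < ν + p1 := by positivity
  have hδ1 : 0 ≤ mahalanobis μ1 S11 x1 := by
    simpa only [mahalanobis, star_trivial] using h11.inv.posSemidef.dotProduct_mulVec_nonneg (x1 - μ1)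
  have hδ2 : 0 ≤ mahalanobis (μ2 + S21 *ᵥ (S11⁻¹ *ᵥ (x1 - μ1))) (S22 - S21 * S11⁻¹ * S12) x2 := by
    simpa only [mahalanobis, star_trivial] using
      hC.inv.posSemidef.dotProduct_mulVec_nonneg (x2 - (μ2 + S21 *ᵥ (S11⁻¹ *ᵥ (x1 - μ1))))
  set δ1 := mahalanobis μ1 S11 x1 with hd1
  set δ2 := mahalanobis (μ2 + S21 *ᵥ (S11⁻¹ *ᵥ (x1 - μ1))) (S22 - S21 * S11⁻¹ * S12) x2 with hd2
  have ha : (0:ℝ) < ν + δ1 := by linarith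
  have hb : (0:ℝ) < ν + (δ1 + δ2) := by linarith
  have hk2 : (0:ℝ) < ν + 2*r + p1 := by linarith
  have hdC : 0 < (S22 - S21 * S11⁻¹ * S12).det := hC.det_pos
  have hc1 : ((ν + δ1) / (ν + p1)) ≠ 0 := by positivity
  have hc2 : ((ν + δ1) / (ν + 2*r + p1)) ≠ 0 := by positivity
  rw [aux_maha_decomp hS h11 hC ht, ← hd1, ← hd2]
  rw [tPdf, tPdf, aux_maha_smul _ (isUnit_iff_ne_zero.mpr hC.det_pos.ne') hc1,
    aux_maha_smul _ (isUnit_iff_ne_zero.mpr hC.det_pos.ne') hc2, ← hd2,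
    Matrix.det_smul, Matrix.det_smul]
  simp only [Fintype.card_fin]
  rw [show 1 + ((ν + δ1) / (ν + ↑p1))⁻¹ * δ2 / (ν + ↑p1) = (ν + (δ1 + δ2)) / (ν + δ1) by
      field_simp; ring]
  rw [show 1 + ((ν + δ1) / (ν + 2*r + ↑p1))⁻¹ * δ2 / (ν + ↑p1 + 2*r) = (ν + (δ1 + δ2)) / (ν + δ1) by
      field_simp; ring]
  rw [show ((p1:ℝ) + ↑p2 + ν)/2 = ((p2:ℝ) + (ν + ↑p1))/2 from by ring,
    show ((p1:ℝ) + ν + 2*r)/2 = (ν + ↑p1 + 2*r)/2 from by ring,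
    show ((p1:ℝ) + ν)/2 = (ν + ↑p1)/2 from by ring,
    show ((p1:ℝ) + ↑p2 + ν + 2*r)/2 = ((p2:ℝ) + (ν + ↑p1 + 2*r))/2 from by ring,
    show (ν + 2*r + (p1:ℝ)) = (ν + ↑p1 + 2*r) from by ring]
  exact aux_scalar_key p2 r (ν+δ1) (ν+(δ1+δ2)) (ν+(p1:ℝ)) (ν+(p1:ℝ)+2*r) (ν+((p1:ℝ)+(p2:ℝ)))
    ((S22 - S21 * S11⁻¹ * S12).det) _ _ _ _ ha hb hk1 (by linarith) (by positivity) hdC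
    (Real.Gamma_pos_of_pos (by positivity)) (Real.Gamma_pos_of_pos (by positivity))
    (Real.Gamma_pos_of_pos (by have := (Nat.cast_nonneg p2 : (0:ℝ) ≤ p2); linarith))
    (Real.Gamma_pos_of_pos (by linarith)) (by ring)
end

section
/- (Proposition 4, conditional weighted moments of the truncated multivariate Student's-t.) Let ν > 0, μ ∈ ℝ^p, Σ positive definite and partitioned conformably with y = (y1,y2), p1 + p2 = p, and r ∈ ℝ with ν + p1 + 2r > 0. Fix y1 ∈ ℝ^{p1} and set δ1 = (y1−μ1)ᵀΣ11⁻¹(y1−μ1), μ_{2.1} = μ2 + Σ21Σ11⁻¹(y1−μ1), Σ_{22.1} = Σ22 − Σ21Σ11⁻¹Σ12, Σ̃_{22.1} = ((ν+δ1)/(ν+p1))Σ_{22.1}, Σ̃*_{22.1} = ((ν+δ1)/(ν+2r+p1))Σ_{22.1}, and d_p(p1,ν,r) = (ν+p)^r Γ((p+ν)/2)Γ((p1+ν+2r)/2)/(Γ((p1+ν)/2)Γ((p+ν+2r)/2)). Then for every Borel set B ⊆ ℝ^{p2} and every Borel function f : ℝ^{p2} → ℝ such that f(·)·t_{p2}(·|μ_{2.1},Σ̃*_{22.1},ν+p1+2r)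 is integrable on B, ∫_B ((ν+p)/(ν+δ(y1,y2)))^r f(y2) t_{p2}(y2|μ_{2.1},Σ̃_{22.1},ν+p1) dy2 = (d_p(p1,ν,r)/(ν+δ1)^r) · ∫_B f(y2) t_{p2}(y2|μ_{2.1},Σ̃*_{22.1},ν+p1+2r) dy2. In particular, for B = (a2,b2) a rectangle and f with values 1, the coordinates, or products of pairs of coordinates, this yields the paper's formula E[((ν+p)/(ν+δ(Y)))^r Y2^{(k)} | Y1 = y1] = (d_p(p1,ν,r)/(ν+δ1)^r) · (T_{p2}(a2,b2;μ_{2.1},Σ̃*_{22.1},ν+p1+2r)/T_{p2}(a2,b2;μ_{2.1},Σ̃_{22.1},ν+p1)) · E[W2^{(k)}], where W2 ∼ t_{p2}(μ_{2.1},Σ̃*_{22.1},ν+p1+2r) truncated to (a2,b2). -/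
open MeasureTheory Matrix Real Filter

section Aux

variable {m n : Type*} [Fintype m] [DecidableEq m] [Fintype n] [DecidableEq n]

lemma blockInvFact (A : Matrix m m ℝ) (B : Matrix m n ℝ) (D : Matrix n n ℝ)
    (hAdet : IsUnit A.det) (hEdet : IsUnit (D - Bᵀ * A⁻¹ * B).det)
    (hAs : Aᵀ = A) :
    (fromBlocks A B Bᵀ D)⁻¹ =
      (fromBlocks 1 0 (-(Bᵀ * A⁻¹)) 1)ᵀ *
        fromBlocks A⁻¹ 0 0 (D - Bᵀ * A⁻¹ * B)⁻¹ *
        fromBlocks 1 0 (-(Bᵀ * A⁻¹)) 1 := by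
  letI iA : Invertible A := A.invertibleOfIsUnitDet hAdet
  have hiA : ⅟A = A⁻¹ := invOf_eq_nonsing_inv A
  letI iE : Invertible (D - Bᵀ * ⅟A * B) :=
    Matrix.invertibleOfIsUnitDet _ (by rw [hiA]; exact hEdet)
  have hiE : ⅟(D - Bᵀ * ⅟A * B) = (D - Bᵀ * A⁻¹ * B)⁻¹ := by
    rw [invOf_eq_nonsing_inv, hiA]
  letI := fromBlocks₁₁Invertible A B Bᵀ D
  rw [← invOf_eq_nonsing_inv, invOf_fromBlocks₁₁_eq, hiE, hiA]
  have htr : (-(Bᵀ * A⁻¹))ᵀ = -(A⁻¹ * B) := by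
    rw [transpose_neg, transpose_mul, transpose_nonsing_inv, hAs, transpose_transpose]
  rw [fromBlocks_transpose, htr]
  simp only [fromBlocks_multiply, transpose_one, transpose_zero, Matrix.mul_one,
    Matrix.one_mul, Matrix.zero_mul, Matrix.mul_zero, add_zero, zero_add,
    Matrix.neg_mul, Matrix.mul_neg, neg_neg]
  simp only [Matrix.mul_assoc]

lemma quadSplit (A : Matrix m m ℝ) (B : Matrix m n ℝ) (D : Matrix n n ℝ)
    (hAdet : IsUnit A.det) (hEdet : IsUnit (D - Bᵀ * A⁻¹ * B).det)
    (hAs : Aᵀ = A) (u : m → ℝ) (v : n → ℝ) :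
    Sum.elim u v ⬝ᵥ ((fromBlocks A B Bᵀ D)⁻¹ *ᵥ Sum.elim u v) =
      u ⬝ᵥ (A⁻¹ *ᵥ u) +
        (v - Bᵀ *ᵥ (A⁻¹ *ᵥ u)) ⬝ᵥ ((D - Bᵀ * A⁻¹ * B)⁻¹ *ᵥ (v - Bᵀ *ᵥ (A⁻¹ *ᵥ u))) := by
  rw [blockInvFact A B D hAdet hEdet hAs]
  set L : Matrix (m ⊕ n) (m ⊕ n) ℝ := fromBlocks 1 0 (-(Bᵀ * A⁻¹)) 1 with hL
  set M := fromBlocks A⁻¹ 0 0 (D - Bᵀ * A⁻¹ * B)⁻¹ with hM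
  have h1 : (Lᵀ * M * L) *ᵥ Sum.elim u v = Lᵀ *ᵥ (M *ᵥ (L *ᵥ Sum.elim u v)) := by
    simp [Matrix.mulVec_mulVec, Matrix.mul_assoc]
  rw [h1, Matrix.dotProduct_mulVec, Matrix.vecMul_transpose]
  have h2 : L *ᵥ Sum.elim u v = Sum.elim u (v - Bᵀ *ᵥ (A⁻¹ *ᵥ u)) := by
    rw [hL, fromBlocks_mulVec]
    simp [Matrix.neg_mulVec, ← Matrix.mulVec_mulVec, sub_eq_neg_add]
  rw [h2, hM, fromBlocks_mulVec]
  simp [sumElim_dotProduct_sumElim]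

set_option linter.unusedSectionVars false in
lemma posDef_blocks {A : Matrix m m ℝ} {B : Matrix m n ℝ} {C : Matrix n m ℝ}
    {D : Matrix n n ℝ} (hS : (fromBlocks A B C D).PosDef) :
    C = Bᵀ ∧ A.PosDef ∧ (D - Bᵀ * A⁻¹ * B).PosDef := by
  obtain ⟨hA, hBC, hCB, hD⟩ := isHermitian_fromBlocks_iff.mp hS.1
  have hBt : Bᴴ = Bᵀ := by ext i j; simp [conjTranspose_apply]
  have hC : C = Bᵀ := by rw [← hBC, hBt]
  have hApd : A.PosDef := by
    refine Matrix.PosDef.of_dotProduct_mulVec_pos hA (fun x hx => ?_)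
    have hz : Sum.elim x (0 : n → ℝ) ≠ 0 := by
      intro h
      apply hx
      ext i
      exact congrFun h (Sum.inl i)
    have := hS.dotProduct_mulVec_pos hz
    simpa [fromBlocks_mulVec, sumElim_dotProduct_sumElim,
      Function.star_sumElim] using this
  letI : Invertible A := A.invertibleOfIsUnitDet hApd.det_pos.ne'.isUnit
  have hSchur : (D - Bᵀ * A⁻¹ * B).PosDef := by
    refine Matrix.PosDef.of_dotProduct_mulVec_pos ?_ ?_
    · rw [← hBt]
      exact (Matrix.IsHermitian.fromBlocks₁₁ B D hA).mp (by rw [hBt, ← hC]; exact hS.1)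
    · intro y hy
      have hz : Sum.elim (-((A⁻¹ * B) *ᵥ y)) y ≠ 0 := by
        intro h
        apply hy
        ext i
        exact congrFun h (Sum.inr i)
      have h0 := hS.dotProduct_mulVec_pos hz
      have heq := Matrix.schur_complement_eq₁₁ (α := ℝ) B D (-((A⁻¹ * B) *ᵥ y)) y hA
      rw [hC] at h0
      rw [← hBt] at h0 ⊢
      have hsd : star (Sum.elim (-((A⁻¹ * B) *ᵥ y)) y) ⬝ᵥ
            (fromBlocks A B Bᴴ D *ᵥ Sum.elim (-((A⁻¹ * B) *ᵥ y)) y) =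
          star (Sum.elim (-((A⁻¹ * B) *ᵥ y)) y) ᵥ* fromBlocks A B Bᴴ D ⬝ᵥ
            Sum.elim (-((A⁻¹ * B) *ᵥ y)) y := by
        rw [Matrix.dotProduct_mulVec]
      rw [hsd, heq] at h0
      simpa [Matrix.dotProduct_mulVec] using h0
  exact ⟨hC, hApd, hSchur⟩

lemma quad_nonneg {M : Matrix n n ℝ} (hM : M.PosSemidef) (x : n → ℝ) :
    0 ≤ x ⬝ᵥ (M *ᵥ x) := by
  have := hM.dotProduct_mulVec_nonneg x
  rwa [star_trivial] at this

lemma herm_transpose {M : Matrix n n ℝ} (h : M.IsHermitian) : Mᵀ = M := by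
  have := h.eq
  rwa [show Mᴴ = Mᵀ by ext i j; simp [conjTranspose_apply]] at this

lemma mahalanobis_smul (μ : n → ℝ) (M : Matrix n n ℝ) (hM : IsUnit M.det)
    {c : ℝ} (hc : c ≠ 0) (x : n → ℝ) :
    mahalanobis μ (c • M) x = c⁻¹ * mahalanobis μ M x := by
  unfold mahalanobis
  letI := invertibleOfNonzero hc
  rw [Matrix.inv_smul M c hM, invOf_eq_inv, Matrix.smul_mulVec, dotProduct_smul,
    smul_eq_mul]

lemma pointwise_key (ν r q1 q2 δ1 δ2 dE : ℝ)
    (hν : 0 < ν) (hq1 : 0 ≤ q1) (hq2 : 0 ≤ q2) (hb : 0 < ν + q1 + 2 * r)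
    (hδ1 : 0 ≤ δ1) (hδ2 : 0 ≤ δ2) (hdE : 0 < dE) :
    ((ν + (q1 + q2)) / (ν + (δ1 + δ2))) ^ r *
      (Real.Gamma ((q2 + (ν + q1)) / 2) /
          (Real.Gamma ((ν + q1) / 2) * Real.pi ^ (q2 / 2) * (ν + q1) ^ (q2 / 2)) *
        (((ν + δ1) / (ν + q1)) ^ q2 * dE) ^ (-(1 : ℝ) / 2) *
        (1 + (((ν + δ1) / (ν + q1))⁻¹ * δ2) / (ν + q1)) ^ (-((q2 + (ν + q1)) / 2)))
    = ((ν + (q1 + q2)) ^ r *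
          (Real.Gamma (((q1 + q2) + ν) / 2) * Real.Gamma ((q1 + ν + 2 * r) / 2) /
            (Real.Gamma ((q1 + ν) / 2) * Real.Gamma (((q1 + q2) + ν + 2 * r) / 2))) /
        (ν + δ1) ^ r) *
      (Real.Gamma ((q2 + (ν + q1 + 2 * r)) / 2) /
          (Real.Gamma ((ν + q1 + 2 * r) / 2) * Real.pi ^ (q2 / 2) *
            (ν + q1 + 2 * r) ^ (q2 / 2)) *
        (((ν + δ1) / (ν + 2 * r + q1)) ^ q2 * dE) ^ (-(1 : ℝ) / 2) *
        (1 + (((ν + δ1) / (ν + 2 * r + q1))⁻¹ * δ2) / (ν + q1 + 2 * r)) ^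
          (-((q2 + (ν + q1 + 2 * r)) / 2))) := by
  have hs : 0 < ν + δ1 := by linarith
  have ht : 0 < ν + (δ1 + δ2) := by linarith
  have ha : 0 < ν + q1 := by linarith
  have hb' : 0 < ν + 2 * r + q1 := by linarith
  have hP : 0 < ν + (q1 + q2) := by linarith
  have hbb : ν + 2 * r + q1 = ν + q1 + 2 * r := by ring
  rw [hbb]
  have h1 : (1 + (((ν + δ1) / (ν + q1))⁻¹ * δ2) / (ν + q1)) =
      (ν + (δ1 + δ2)) / (ν + δ1) := by
    field_simp
    ring
  have h2 : (1 + (((ν + δ1) / (ν + q1 + 2 * r))⁻¹ * δ2) / (ν + q1 + 2 * r)) =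
      (ν + (δ1 + δ2)) / (ν + δ1) := by
    field_simp
    ring
  rw [h1, h2]
  have hΓ1 := Real.Gamma_pos_of_pos (show 0 < (q2 + (ν + q1)) / 2 by linarith)
  have hΓ2 := Real.Gamma_pos_of_pos (show 0 < (ν + q1) / 2 by linarith)
  have hΓ3 := Real.Gamma_pos_of_pos (show 0 < ((q1 + q2) + ν) / 2 by linarith)
  have hΓ4 := Real.Gamma_pos_of_pos (show 0 < (q1 + ν + 2 * r) / 2 by linarith)
  have hΓ5 := Real.Gamma_pos_of_pos (show 0 < (q1 + ν) / 2 by linarith)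
  have hΓ6 := Real.Gamma_pos_of_pos (show 0 < ((q1 + q2) + ν + 2 * r) / 2 by linarith)
  have hΓ7 := Real.Gamma_pos_of_pos (show 0 < (q2 + (ν + q1 + 2 * r)) / 2 by linarith)
  have hΓ8 := Real.Gamma_pos_of_pos (show 0 < (ν + q1 + 2 * r) / 2 by linarith)
  have hts : 0 < (ν + (δ1 + δ2)) / (ν + δ1) := div_pos ht hs
  have hsa : 0 < (ν + δ1) / (ν + q1) := div_pos hs ha
  have hsb : 0 < (ν + δ1) / (ν + q1 + 2 * r) := div_pos hs hb
  have hπ := Real.pi_pos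
  have hL : 0 < ((ν + (q1 + q2)) / (ν + (δ1 + δ2))) ^ r *
      (Real.Gamma ((q2 + (ν + q1)) / 2) /
          (Real.Gamma ((ν + q1) / 2) * Real.pi ^ (q2 / 2) * (ν + q1) ^ (q2 / 2)) *
        (((ν + δ1) / (ν + q1)) ^ q2 * dE) ^ (-(1 : ℝ) / 2) *
        ((ν + (δ1 + δ2)) / (ν + δ1)) ^ (-((q2 + (ν + q1)) / 2))) := by
    positivity
  have hR : 0 < ((ν + (q1 + q2)) ^ r *
          (Real.Gamma (((q1 + q2) + ν) / 2) * Real.Gamma ((q1 + ν + 2 * r) / 2) /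
            (Real.Gamma ((q1 + ν) / 2) * Real.Gamma (((q1 + q2) + ν + 2 * r) / 2))) /
        (ν + δ1) ^ r) *
      (Real.Gamma ((q2 + (ν + q1 + 2 * r)) / 2) /
          (Real.Gamma ((ν + q1 + 2 * r) / 2) * Real.pi ^ (q2 / 2) *
            (ν + q1 + 2 * r) ^ (q2 / 2)) *
        (((ν + δ1) / (ν + q1 + 2 * r)) ^ q2 * dE) ^ (-(1 : ℝ) / 2) *
        ((ν + (δ1 + δ2)) / (ν + δ1)) ^ (-((q2 + (ν + q1 + 2 * r)) / 2))) := by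
    positivity
  apply Real.log_injOn_pos (Set.mem_Ioi.mpr hL) (Set.mem_Ioi.mpr hR)
  have e1 : (0:ℝ) < ((ν + (q1 + q2)) / (ν + (δ1 + δ2))) ^ r := by positivity
  have e2 : (0:ℝ) < (((ν + δ1) / (ν + q1)) ^ q2 * dE) ^ (-(1:ℝ) / 2) := by positivity
  have e3 : (0:ℝ) < ((ν + (δ1 + δ2)) / (ν + δ1)) ^ (-((q2 + (ν + q1)) / 2)) := by positivity
  have e4 : (0:ℝ) < (ν + (q1 + q2)) ^ r := by positivity
  have e5 : (0:ℝ) < (ν + δ1) ^ r := by positivity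
  have e6 : (0:ℝ) < (((ν + δ1) / (ν + q1 + 2 * r)) ^ q2 * dE) ^ (-(1:ℝ) / 2) := by positivity
  have e7 : (0:ℝ) < ((ν + (δ1 + δ2)) / (ν + δ1)) ^ (-((q2 + (ν + q1 + 2 * r)) / 2)) := by
    positivity
  have e8 : (0:ℝ) < Real.pi ^ (q2 / 2) := by positivity
  have e9 : (0:ℝ) < (ν + q1) ^ (q2 / 2) := by positivity
  have e10 : (0:ℝ) < (ν + q1 + 2 * r) ^ (q2 / 2) := by positivity
  have e11 : (0:ℝ) < ((ν + δ1) / (ν + q1)) ^ q2 := by positivity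
  have e12 : (0:ℝ) < ((ν + δ1) / (ν + q1 + 2 * r)) ^ q2 := by positivity
  have e13 : (0:ℝ) < ((ν + δ1) / (ν + q1)) ^ q2 * dE := by positivity
  have e14 : (0:ℝ) < ((ν + δ1) / (ν + q1 + 2 * r)) ^ q2 * dE := by positivity
  simp only [Real.log_mul, Real.log_div, Real.log_rpow, ne_eq, mul_ne_zero_iff,
    div_ne_zero_iff, not_false_eq_true, and_self, and_true, true_and,
    hΓ1.ne', hΓ2.ne', hΓ3.ne', hΓ4.ne', hΓ5.ne', hΓ6.ne', hΓ7.ne', hΓ8.ne',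
    e1.ne', e2.ne', e3.ne', e4.ne', e5.ne', e6.ne', e7.ne', e8.ne', e9.ne', e10.ne',
    e11.ne', e12.ne', hdE.ne', hs.ne', ht.ne', ha.ne', hb.ne', hP.ne',
    e13, e14, hts, hsa, hsb, hs, ht, ha, hb, hP, hdE, hπ, div_pos hP ht, e11, e12]
  ring

end Aux

/-- Proposition 4: conditional weighted moments of the truncated
multivariate Student's-t. -/
theorem tPdf_conditional_weighted_moments {p1 p2 : ℕ} (ν r : ℝ) (hν : 0 < ν)
    (hr : 0 < ν + (p1 : ℝ) + 2 * r)
    (μ1 : Fin p1 → ℝ) (μ2 : Fin p2 → ℝ)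
    (S11 : Matrix (Fin p1) (Fin p1) ℝ) (S12 : Matrix (Fin p1) (Fin p2) ℝ)
    (S21 : Matrix (Fin p2) (Fin p1) ℝ) (S22 : Matrix (Fin p2) (Fin p2) ℝ)
    (hS : (Matrix.fromBlocks S11 S12 S21 S22).PosDef)
    (y1 : Fin p1 → ℝ)
    (B : Set (Fin p2 → ℝ)) (hB : MeasurableSet B)
    (f : (Fin p2 → ℝ) → ℝ) (hfm : Measurable f)
    (hfi : IntegrableOn
      (fun y2 => f y2 *
        tPdf (μ2 + S21 *ᵥ (S11⁻¹ *ᵥ (y1 - μ1)))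
          (((ν + mahalanobis μ1 S11 y1) / (ν + 2 * r + (p1 : ℝ))) • (S22 - S21 * S11⁻¹ * S12))
          (ν + (p1 : ℝ) + 2 * r) y2) B) :
    ∫ y2 in B,
        ((ν + ((p1 : ℝ) + (p2 : ℝ))) /
            (ν + mahalanobis (Sum.elim μ1 μ2) (Matrix.fromBlocks S11 S12 S21 S22)
              (Sum.elim y1 y2))) ^ r *
          f y2 *
          tPdf (μ2 + S21 *ᵥ (S11⁻¹ *ᵥ (y1 - μ1)))
            (((ν + mahalanobis μ1 S11 y1) / (ν + (p1 : ℝ))) • (S22 - S21 * S11⁻¹ * S12))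
            (ν + (p1 : ℝ)) y2
      = ((ν + ((p1 : ℝ) + (p2 : ℝ))) ^ r *
            (Real.Gamma ((((p1 : ℝ) + (p2 : ℝ)) + ν) / 2) *
              Real.Gamma (((p1 : ℝ) + ν + 2 * r) / 2) /
              (Real.Gamma (((p1 : ℝ) + ν) / 2) *
                Real.Gamma ((((p1 : ℝ) + (p2 : ℝ)) + ν + 2 * r) / 2))) /
          (ν + mahalanobis μ1 S11 y1) ^ r) *
        ∫ y2 in B,
          f y2 *
            tPdf (μ2 + S21 *ᵥ (S11⁻¹ *ᵥ (y1 - μ1)))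
              (((ν + mahalanobis μ1 S11 y1) / (ν + 2 * r + (p1 : ℝ))) • (S22 - S21 * S11⁻¹ * S12))
              (ν + (p1 : ℝ) + 2 * r) y2 := by
  obtain ⟨hC, hApd, hEpd⟩ := posDef_blocks hS
  rw [hC]
  set E := S22 - S12ᵀ * S11⁻¹ * S12 with hE
  have hAdet : IsUnit S11.det := hApd.det_pos.ne'.isUnit
  have hEdet : IsUnit E.det := hEpd.det_pos.ne'.isUnit
  have hAs : S11ᵀ = S11 := herm_transpose hApd.1
  have hδ1 : 0 ≤ mahalanobis μ1 S11 y1 := quad_nonneg hApd.inv.posSemidef (y1 - μ1)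
  have hδ2 : ∀ y2 : Fin p2 → ℝ,
      0 ≤ mahalanobis (μ2 + S12ᵀ *ᵥ (S11⁻¹ *ᵥ (y1 - μ1))) E y2 := fun y2 =>
    quad_nonneg hEpd.inv.posSemidef _
  have hkey : ∀ y2 : Fin p2 → ℝ,
      mahalanobis (Sum.elim μ1 μ2) (fromBlocks S11 S12 S12ᵀ S22) (Sum.elim y1 y2) =
        mahalanobis μ1 S11 y1 +
          mahalanobis (μ2 + S12ᵀ *ᵥ (S11⁻¹ *ᵥ (y1 - μ1))) E y2 := by
    intro y2
    have hsub : Sum.elim y1 y2 - Sum.elim μ1 μ2 = Sum.elim (y1 - μ1) (y2 - μ2) := by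
      funext i
      cases i <;> simp
    have hw : y2 - μ2 - S12ᵀ *ᵥ (S11⁻¹ *ᵥ (y1 - μ1)) =
        y2 - (μ2 + S12ᵀ *ᵥ (S11⁻¹ *ᵥ (y1 - μ1))) := sub_sub _ _ _
    unfold mahalanobis
    rw [hsub, quadSplit S11 S12 S22 hAdet hEdet hAs (y1 - μ1) (y2 - μ2), hw, ← hE]
  have hq1 : (0:ℝ) ≤ (p1 : ℝ) := Nat.cast_nonneg _
  have hq2 : (0:ℝ) ≤ (p2 : ℝ) := Nat.cast_nonneg _
  have hs : 0 < ν + mahalanobis μ1 S11 y1 := by linarith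
  have ha : 0 < ν + (p1 : ℝ) := by linarith
  have hb2 : 0 < ν + 2 * r + (p1 : ℝ) := by linarith
  have hc1 : (0:ℝ) < (ν + mahalanobis μ1 S11 y1) / (ν + (p1 : ℝ)) := div_pos hs ha
  have hc2 : (0:ℝ) < (ν + mahalanobis μ1 S11 y1) / (ν + 2 * r + (p1 : ℝ)) := div_pos hs hb2
  have hpt : ∀ y2 : Fin p2 → ℝ,
      ((ν + ((p1 : ℝ) + (p2 : ℝ))) /
            (ν + mahalanobis (Sum.elim μ1 μ2) (fromBlocks S11 S12 S12ᵀ S22)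
              (Sum.elim y1 y2))) ^ r *
          f y2 *
          tPdf (μ2 + S12ᵀ *ᵥ (S11⁻¹ *ᵥ (y1 - μ1)))
            (((ν + mahalanobis μ1 S11 y1) / (ν + (p1 : ℝ))) • E) (ν + (p1 : ℝ)) y2
        = ((ν + ((p1 : ℝ) + (p2 : ℝ))) ^ r *
            (Real.Gamma ((((p1 : ℝ) + (p2 : ℝ)) + ν) / 2) *
              Real.Gamma (((p1 : ℝ) + ν + 2 * r) / 2) /
              (Real.Gamma (((p1 : ℝ) + ν) / 2) *
                Real.Gamma ((((p1 : ℝ) + (p2 : ℝ)) + ν + 2 * r) / 2))) /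
          (ν + mahalanobis μ1 S11 y1) ^ r) *
          (f y2 *
            tPdf (μ2 + S12ᵀ *ᵥ (S11⁻¹ *ᵥ (y1 - μ1)))
              (((ν + mahalanobis μ1 S11 y1) / (ν + 2 * r + (p1 : ℝ))) • E)
              (ν + (p1 : ℝ) + 2 * r) y2) := by
    intro y2
    have h := pointwise_key ν r (p1 : ℝ) (p2 : ℝ) (mahalanobis μ1 S11 y1)
      (mahalanobis (μ2 + S12ᵀ *ᵥ (S11⁻¹ *ᵥ (y1 - μ1))) E y2) E.det
      hν hq1 hq2 hr hδ1 (hδ2 y2) hEpd.det_pos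
    simp only [tPdf, Fintype.card_fin, hkey y2,
      mahalanobis_smul (μ2 + S12ᵀ *ᵥ (S11⁻¹ *ᵥ (y1 - μ1))) E hEdet hc1.ne' y2,
      mahalanobis_smul (μ2 + S12ᵀ *ᵥ (S11⁻¹ *ᵥ (y1 - μ1))) E hEdet hc2.ne' y2,
      Matrix.det_smul,
      ← Real.rpow_natCast ((ν + mahalanobis μ1 S11 y1) / (ν + (p1 : ℝ))) p2,
      ← Real.rpow_natCast ((ν + mahalanobis μ1 S11 y1) / (ν + 2 * r + (p1 : ℝ))) p2]
    linear_combination f y2 * h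
  rw [setIntegral_congr_fun hB (fun y2 _ => hpt y2), MeasureTheory.integral_const_mul]
end

section
/- (Inverse Mills ratio correction, equation for E[Y1 | C = 1].) Let σ > 0, ρ ∈ (−1,1), and m1, m2 ∈ ℝ (the linear predictors xᵀβ and wᵀγ). Let (Y1,Y2) be bivariate normal with mean (m1,m2) and covariance Σ = [[σ², ρσ],[ρσ, 1]]. Then ∫_ℝ ∫_0^∞ y1 · φ₂((y1,y2)|(m1,m2),Σ) dy2 dy1 = m1·Φ(m2) + ρσ·φ(m2), and consequently, since P(Y2 > 0) = Φ(m2), E[Y1 | Y2 > 0] = m1 + ρσ·λ(m2), where λ(a) = φ(a)/Φ(a) is the inverse Mills ratio and φ, Φ are the standard normal pdf and cdf. -/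
open MeasureTheory Matrix Real Filter

noncomputable def gpdf (c v x : ℝ) : ℝ :=
  (Real.sqrt (2 * Real.pi * v))⁻¹ * Real.exp (-(x - c) ^ 2 / (2 * v))

lemma maha_eq (σ ρ m1 m2 y1 y2 : ℝ) (hσ : 0 < σ) (hρ1 : -1 < ρ) (hρ2 : ρ < 1) :
    mahalanobis ![m1, m2] !![σ ^ 2, ρ * σ; ρ * σ, 1] ![y1, y2]
      = (y1 - (m1 + ρ * σ * (y2 - m2))) ^ 2 / (σ ^ 2 * (1 - ρ ^ 2)) + (y2 - m2) ^ 2 := by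
  have h1 : (0:ℝ) < σ ^ 2 := by positivity
  have h2 : (0:ℝ) < 1 - ρ ^ 2 := by nlinarith
  have hv : (0:ℝ) < σ ^ 2 * (1 - ρ ^ 2) := mul_pos h1 h2
  have hinv : (!![σ ^ 2, ρ * σ; ρ * σ, 1] : Matrix (Fin 2) (Fin 2) ℝ)⁻¹
      = (σ ^ 2 * (1 - ρ ^ 2))⁻¹ • !![1, -(ρ * σ); -(ρ * σ), σ ^ 2] := by
    apply Matrix.inv_eq_right_inv
    ext i j
    fin_cases i <;> fin_cases j <;>
      simp [Matrix.mul_apply, Fin.sum_univ_two, Matrix.smul_apply] <;>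
      field_simp <;> ring
  rw [mahalanobis, hinv]
  have hsub : (![y1, y2] - ![m1, m2] : Fin 2 → ℝ) = ![y1 - m1, y2 - m2] := by
    funext i; fin_cases i <;> simp
  rw [hsub]
  simp only [Matrix.smul_mulVec, Matrix.smul_apply, Matrix.of_apply, Matrix.mulVec, dotProduct, Fin.sum_univ_two,
    Matrix.cons_val_zero, Matrix.cons_val_one, Matrix.head_cons, Pi.smul_apply, smul_eq_mul,
    Matrix.cons_val', Matrix.head_fin_const, Matrix.empty_val', Matrix.cons_val_fin_one]
  field_simp
  ring

lemma normalPdf_factor (σ ρ m1 m2 : ℝ) (hσ : 0 < σ) (hρ1 : -1 < ρ) (hρ2 : ρ < 1) (y1 y2 : ℝ) :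
    normalPdf ![m1, m2] !![σ ^ 2, ρ * σ; ρ * σ, 1] ![y1, y2]
      = gpdf (m1 + ρ * σ * (y2 - m2)) (σ ^ 2 * (1 - ρ ^ 2)) y1 * gpdf m2 1 y2 := by
  have h1 : (0:ℝ) < σ ^ 2 := by positivity
  have h2 : (0:ℝ) < 1 - ρ ^ 2 := by nlinarith
  have hv : (0:ℝ) < σ ^ 2 * (1 - ρ ^ 2) := mul_pos h1 h2
  have hdet : (!![σ ^ 2, ρ * σ; ρ * σ, 1] : Matrix (Fin 2) (Fin 2) ℝ).det
      = σ ^ 2 * (1 - ρ ^ 2) := by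
    rw [Matrix.det_fin_two_of]; ring
  have hpi : (0:ℝ) < 2 * Real.pi := by positivity
  rw [normalPdf, hdet, maha_eq σ ρ m1 m2 y1 y2 hσ hρ1 hρ2, gpdf, gpdf]
  have hcard : (Fintype.card (Fin 2) : ℝ) = 2 := by simp
  rw [hcard]
  have e1 : ((2:ℝ) * Real.pi) ^ (-(2:ℝ) / 2) = (2 * Real.pi)⁻¹ := by
    rw [show (-(2:ℝ)/2) = -1 by norm_num, Real.rpow_neg_one]
  have e2 : (σ ^ 2 * (1 - ρ ^ 2)) ^ (-(1:ℝ) / 2) = (Real.sqrt (σ ^ 2 * (1 - ρ ^ 2)))⁻¹ := by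
    rw [show (-(1:ℝ)/2) = -(1/2) by norm_num, Real.rpow_neg hv.le, Real.sqrt_eq_rpow]
  rw [e1, e2]
  have e3 : Real.exp (-((y1 - (m1 + ρ * σ * (y2 - m2))) ^ 2 / (σ ^ 2 * (1 - ρ ^ 2)) + (y2 - m2) ^ 2) / 2)
      = Real.exp (-(y1 - (m1 + ρ * σ * (y2 - m2))) ^ 2 / (2 * (σ ^ 2 * (1 - ρ ^ 2)))) *
        Real.exp (-(y2 - m2) ^ 2 / (2 * 1)) := by
    rw [← Real.exp_add]; congr 1; field_simp; ring
  rw [e3]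
  have e4 : Real.sqrt (2 * Real.pi * (σ ^ 2 * (1 - ρ ^ 2)))
      = Real.sqrt (2 * Real.pi) * Real.sqrt (σ ^ 2 * (1 - ρ ^ 2)) := Real.sqrt_mul hpi.le _
  have e5 : Real.sqrt (2 * Real.pi * 1) = Real.sqrt (2 * Real.pi) := by rw [mul_one]
  have e6 : Real.sqrt (2 * Real.pi) * Real.sqrt (2 * Real.pi) = 2 * Real.pi :=
    Real.mul_self_sqrt hpi.le
  have e7 : ((2:ℝ) * Real.pi)⁻¹ = (Real.sqrt (2 * Real.pi))⁻¹ * (Real.sqrt (2 * Real.pi))⁻¹ := by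
    rw [← mul_inv, e6]
  rw [e4, e5, e7, mul_inv]
  ring

open ProbabilityTheory in
lemma gpdf_eq (c : ℝ) {v : ℝ} (hv : 0 < v) :
    gpdf c v = gaussianPDFReal c ⟨v, hv.le⟩ := by
  funext x; rfl

lemma gpdf_nonneg (c : ℝ) {v : ℝ} (hv : 0 < v) (x : ℝ) : 0 ≤ gpdf c v x := by
  rw [gpdf_eq c hv]; exact ProbabilityTheory.gaussianPDFReal_nonneg _ _ _

lemma gpdf_integrable (c : ℝ) {v : ℝ} (hv : 0 < v) : Integrable (gpdf c v) := by
  rw [gpdf_eq c hv]; exact ProbabilityTheory.integrable_gaussianPDFReal _ _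

lemma gpdf_integral_one (c : ℝ) {v : ℝ} (hv : 0 < v) : ∫ x, gpdf c v x = 1 := by
  rw [gpdf_eq c hv]
  exact ProbabilityTheory.integral_gaussianPDFReal_eq_one c (by exact ((NNReal.coe_pos (r := ⟨v, hv.le⟩)).mp hv).ne')

lemma gpdf_shift (c v x : ℝ) : gpdf c v (x + c) = gpdf 0 v x := by
  simp [gpdf]

lemma integrable_mul_gpdf (c : ℝ) {v : ℝ} (hv : 0 < v) :
    Integrable (fun x => x * gpdf c v x) := by
  have h : Integrable (fun x : ℝ => x * Real.exp (-(2*v)⁻¹ * x ^ 2)) :=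
    integrable_mul_exp_neg_mul_sq (by positivity)
  have h2 : Integrable (fun x : ℝ => (Real.sqrt (2*Real.pi*v))⁻¹ *
      (x * Real.exp (-(2*v)⁻¹ * x ^ 2))) := h.const_mul _
  have h3 : Integrable (fun x : ℝ => (x + c) * gpdf c v (x + c)) := by
    have : (fun x : ℝ => (x + c) * gpdf c v (x + c))
        = fun x : ℝ => x * gpdf c v (x + c) + c * gpdf c v (x + c) := by
      funext x; ring
    rw [this]
    refine Integrable.add ?_ ?_
    · simp_rw [gpdf_shift]
      refine h2.congr (Eventually.of_forall fun x => ?_)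
      have h0 : -(2*v)⁻¹ * x ^ 2 = -(x - 0)^2/(2*v) := by field_simp; ring
      simp only [gpdf, h0]
      ring
    · exact ((gpdf_integrable c hv).comp_add_right c).const_mul c
  have := h3.comp_sub_right c
  simpa using this

lemma gpdf_mean (c : ℝ) {v : ℝ} (hv : 0 < v) : ∫ x, x * gpdf c v x = c := by
  have hshift : ∫ x, x * gpdf c v x = ∫ x, (x + c) * gpdf c v (x + c) := by
    rw [← integral_add_right_eq_self (fun x => x * gpdf c v x) c]
  rw [hshift]
  simp_rw [gpdf_shift, add_mul]
  have hodd : ∫ x : ℝ, x * gpdf 0 v x = 0 := by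
    have hneg : ∫ x : ℝ, -x * gpdf 0 v (-x) = ∫ x : ℝ, x * gpdf 0 v x :=
      integral_neg_eq_self (fun x => x * gpdf 0 v x) volume
    have heven : ∀ x : ℝ, gpdf 0 v (-x) = gpdf 0 v x := by
      intro x; simp [gpdf, neg_sq]
    simp_rw [heven, neg_mul] at hneg
    rw [integral_neg] at hneg
    linarith
  have hint1 : Integrable (fun x : ℝ => x * gpdf 0 v x) := by
    simpa using integrable_mul_gpdf 0 hv
  have hint2 : Integrable (fun x : ℝ => c * gpdf 0 v x) := (gpdf_integrable 0 hv).const_mul c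
  rw [integral_add hint1 hint2, hodd, integral_const_mul, gpdf_integral_one 0 hv]
  simp

lemma gpdf_one_eq (m2 y : ℝ) : gpdf m2 1 y = stdNormalPdf (y - m2) := by
  simp [gpdf, stdNormalPdf]

lemma outer1 (m2 : ℝ) : ∫ y in Set.Ioi (0:ℝ), gpdf m2 1 y = stdNormalCdf m2 := by
  have heven : ∀ y : ℝ, gpdf m2 1 y = stdNormalPdf (m2 + -y) := by
    intro y; rw [gpdf_one_eq]
    have : y - m2 = -(m2 + -y) := by ring
    rw [this]
    simp only [stdNormalPdf, neg_sq]
  calc ∫ y in Set.Ioi (0:ℝ), gpdf m2 1 y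
      = ∫ y in Set.Ioi (0:ℝ), stdNormalPdf (m2 + -y) := by
        refine setIntegral_congr_fun measurableSet_Ioi fun y _ => heven y
    _ = ∫ x in Set.Iic (-(0:ℝ)), stdNormalPdf (m2 + x) :=
        integral_comp_neg_Ioi 0 (fun x => stdNormalPdf (m2 + x))
    _ = ∫ x in Set.Iic (0:ℝ), stdNormalPdf (x + m2) := by
        rw [neg_zero]; congr 1; funext x; rw [add_comm]
    _ = stdNormalCdf m2 := by
        rw [stdNormalCdf]
        have h := (measurePreserving_add_right (volume : Measure ℝ) m2).setIntegral_preimage_emb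
          (measurableEmbedding_addRight m2) stdNormalPdf (Set.Iic m2)
        have hpre : (fun x : ℝ => x + m2) ⁻¹' Set.Iic m2 = Set.Iic 0 := by
          ext x; simp [Set.mem_Iic]
        rw [hpre] at h
        exact h

lemma stdNormalPdf_integrable : Integrable stdNormalPdf := by
  have := gpdf_integrable 0 one_pos
  refine this.congr (Eventually.of_forall fun x => ?_)
  simp [gpdf, stdNormalPdf]

lemma outer2 (m2 : ℝ) :
    ∫ y in Set.Ioi (0:ℝ), (y - m2) * gpdf m2 1 y = stdNormalPdf m2 := by
  set K : ℝ := (Real.sqrt (2 * Real.pi))⁻¹ with hK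
  have hderiv : ∀ y ∈ Set.Ici (0:ℝ), HasDerivAt (fun y => -gpdf m2 1 y)
      ((y - m2) * gpdf m2 1 y) y := by
    intro y _
    have h1 : HasDerivAt (fun y : ℝ => y - m2) 1 y := (hasDerivAt_id y).sub_const m2
    have h2 : HasDerivAt (fun y : ℝ => (y - m2) ^ 2) (2 * (y - m2) ^ 1 * 1) y := h1.pow 2
    have h3 : HasDerivAt (fun y : ℝ => (-(1:ℝ)/2) * (y - m2) ^ 2)
        ((-(1:ℝ)/2) * (2 * (y - m2) ^ 1 * 1)) y := h2.const_mul _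
    have h4 := (h3.exp).const_mul (-K)
    have harg : ∀ z : ℝ, -(z - m2)^2/(2*1) = (-(1:ℝ)/2) * (z - m2)^2 := fun z => by ring
    have hfun : (fun y => -gpdf m2 1 y) = fun y => -K * Real.exp ((-(1:ℝ)/2) * (y - m2)^2) := by
      funext z
      simp only [gpdf, hK, mul_one]
      rw [show -(z - m2)^2/2 = (-(1:ℝ)/2) * (z - m2)^2 from by ring, neg_mul]
    have h5 : HasDerivAt (fun y => -gpdf m2 1 y)
        (-K * (Real.exp ((-(1:ℝ)/2) * (y - m2)^2) * ((-(1:ℝ)/2) * (2 * (y - m2) ^ 1 * 1)))) y := by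
      rw [hfun]; exact h4
    convert h5 using 1
    simp only [gpdf, hK, mul_one]
    rw [show -(y - m2)^2/2 = (-(1:ℝ)/2) * (y - m2)^2 from by ring]
    ring
  have hint : IntegrableOn (fun y => (y - m2) * gpdf m2 1 y) (Set.Ioi 0) := by
    have : Integrable (fun y : ℝ => (y - m2) * gpdf m2 1 y) := by
      have h1 := integrable_mul_gpdf m2 one_pos
      have h2 := (gpdf_integrable m2 one_pos).const_mul m2
      refine (h1.sub h2).congr (Eventually.of_forall fun x => ?_)
      simp only [Pi.sub_apply]
      ring
    exact this.restrict
  have htend : Tendsto (fun y => -gpdf m2 1 y) atTop (nhds 0) := by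
    have hsq : Tendsto (fun y : ℝ => (y - m2) ^ 2) atTop atTop :=
      (tendsto_pow_atTop two_ne_zero).comp (tendsto_atTop_add_const_right _ _ tendsto_id)
    have h5 : Tendsto (fun y : ℝ => -(y - m2) ^ 2 / (2*1)) atTop atBot := by
      apply Tendsto.atBot_div_const (by norm_num)
      exact tendsto_neg_atTop_atBot.comp hsq
    have hexp : Tendsto (fun y : ℝ => Real.exp (-(y - m2)^2/(2*1))) atTop (nhds 0) :=
      Real.tendsto_exp_atBot.comp h5
    have hfun2 : (fun y => -gpdf m2 1 y)
        = fun y => -(K * Real.exp (-(y - m2)^2/(2*1))) := by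
      funext y; simp only [gpdf, hK, mul_one]
    rw [hfun2, show (0:ℝ) = -(K * 0) by ring]
    exact (hexp.const_mul K).neg
  have := integral_Ioi_of_hasDerivAt_of_tendsto' hderiv hint htend
  rw [this]
  simp only [zero_sub, neg_neg, gpdf, stdNormalPdf, mul_one]
  rw [neg_sq]

lemma exp_bound (σ ρ m1 m2 y1 y2 : ℝ) (hσ : 0 < σ) (hρ1 : -1 < ρ) (hρ2 : ρ < 1) :
    -(y1 - (m1 + ρ*σ*(y2-m2)))^2/(2*(σ^2*(1-ρ^2))) + -(y2-m2)^2/(2*1)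
      ≤ -(y1-m1)^2/(4*σ^2) + -(y2-m2)^2/(2*(1+ρ^2)) := by
  have h1 : (0:ℝ) < σ ^ 2 := by positivity
  have h2 : (0:ℝ) < 1 - ρ ^ 2 := by nlinarith
  have h3 : (0:ℝ) < 1 + ρ ^ 2 := by positivity
  rw [← sub_nonneg]
  have hId : (-(y1-m1)^2/(4*σ^2) + -(y2-m2)^2/(2*(1+ρ^2)))
      - (-(y1 - (m1 + ρ*σ*(y2-m2)))^2/(2*(σ^2*(1-ρ^2))) + -(y2-m2)^2/(2*1))
      = ((1+ρ^2)*(y1-m1) - 2*ρ*σ*(y2-m2))^2/(4*σ^2*(1-ρ^2)*(1+ρ^2)) := by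
    field_simp
    ring
  rw [hId]
  positivity

lemma intG (m1 : ℝ) {b : ℝ} (hb : 0 < b) :
    Integrable (fun y1 : ℝ => (|y1 - m1| + |m1|) * Real.exp (-b * (y1 - m1)^2)) := by
  have h1 : Integrable (fun u : ℝ => |u| * Real.exp (-b * u^2)) := by
    have := (integrable_mul_exp_neg_mul_sq hb).abs
    refine this.congr (Eventually.of_forall fun u => ?_)
    simp [abs_mul, abs_of_pos, Real.exp_pos]
  have h2 : Integrable (fun u : ℝ => |m1| * Real.exp (-b * u^2)) :=
    (integrable_exp_neg_mul_sq hb).const_mul _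
  have h3 := (h1.add h2).comp_sub_right m1
  refine h3.congr (Eventually.of_forall fun u => ?_)
  simp [add_mul]

/-- inverse Mills ratio correction, E[Y1 | C = 1]. -/
theorem heckman_inverse_mills (σ ρ m1 m2 : ℝ)
    (hσ : 0 < σ) (hρ1 : -1 < ρ) (hρ2 : ρ < 1) :
    (∫ y1 : ℝ, ∫ y2 in Set.Ioi (0 : ℝ),
        y1 * normalPdf ![m1, m2] !![σ ^ 2, ρ * σ; ρ * σ, 1] ![y1, y2])
      = m1 * stdNormalCdf m2 + ρ * σ * stdNormalPdf m2 ∧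
    (∫ y1 : ℝ, ∫ y2 in Set.Ioi (0 : ℝ),
        y1 * normalPdf ![m1, m2] !![σ ^ 2, ρ * σ; ρ * σ, 1] ![y1, y2]) /
        stdNormalCdf m2
      = m1 + ρ * σ * (stdNormalPdf m2 / stdNormalCdf m2) := by
  have h1 : (0:ℝ) < σ ^ 2 := by positivity
  have h2 : (0:ℝ) < 1 - ρ ^ 2 := by nlinarith
  have h3 : (0:ℝ) < 1 + ρ ^ 2 := by positivity
  set v : ℝ := σ ^ 2 * (1 - ρ ^ 2) with hvdef
  have hv : 0 < v := mul_pos h1 h2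
  set Kv : ℝ := (Real.sqrt (2 * Real.pi * v))⁻¹ with hKv
  set K1 : ℝ := (Real.sqrt (2 * Real.pi * 1))⁻¹ with hK1
  have hKvpos : 0 < Kv := by rw [hKv]; positivity
  have hK1pos : 0 < K1 := by rw [hK1]; positivity
  -- main integral value
  have hmain : (∫ y1 : ℝ, ∫ y2 in Set.Ioi (0 : ℝ),
        y1 * normalPdf ![m1, m2] !![σ ^ 2, ρ * σ; ρ * σ, 1] ![y1, y2])
      = m1 * stdNormalCdf m2 + ρ * σ * stdNormalPdf m2 := by
    have hfac := normalPdf_factor σ ρ m1 m2 hσ hρ1 hρ2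
    simp_rw [hfac, ← mul_assoc]
    -- integrability on the product
    have hG : Integrable (fun y1 : ℝ => Kv * K1 *
        ((|y1 - m1| + |m1|) * Real.exp (-(4*σ^2)⁻¹ * (y1 - m1)^2))) :=
      (intG m1 (by positivity)).const_mul _
    have hH : Integrable (fun y2 : ℝ => Real.exp (-(2*(1+ρ^2))⁻¹ * (y2 - m2)^2))
        ((volume : Measure ℝ).restrict (Set.Ioi 0)) := by
      exact ((integrable_exp_neg_mul_sq (by positivity)).comp_sub_right m2).restrict
    have hcont : Continuous (fun p : ℝ × ℝ =>
        p.1 * gpdf (m1 + ρ * σ * (p.2 - m2)) v p.1 * gpdf m2 1 p.2) := by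
      simp only [gpdf]
      fun_prop
    have hbound : ∀ p : ℝ × ℝ,
        ‖p.1 * gpdf (m1 + ρ * σ * (p.2 - m2)) v p.1 * gpdf m2 1 p.2‖
        ≤ (fun y1 => Kv * K1 * ((|y1 - m1| + |m1|) * Real.exp (-(4*σ^2)⁻¹ * (y1 - m1)^2))) p.1
          * (fun y2 => Real.exp (-(2*(1+ρ^2))⁻¹ * (y2 - m2)^2)) p.2 := by
      rintro ⟨y1, y2⟩
      simp only
      have hprod : gpdf (m1 + ρ * σ * (y2 - m2)) v y1 * gpdf m2 1 y2
          ≤ Kv * K1 * (Real.exp (-(4*σ^2)⁻¹ * (y1 - m1)^2)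
              * Real.exp (-(2*(1+ρ^2))⁻¹ * (y2 - m2)^2)) := by
        rw [gpdf, gpdf, ← hKv, ← hK1]
        rw [show Kv * Real.exp (-(y1 - (m1 + ρ*σ*(y2-m2)))^2/(2*v))
            * (K1 * Real.exp (-(y2-m2)^2/(2*1)))
          = Kv * K1 * (Real.exp (-(y1 - (m1 + ρ*σ*(y2-m2)))^2/(2*v))
            * Real.exp (-(y2-m2)^2/(2*1))) from by ring]
        refine mul_le_mul_of_nonneg_left ?_ (by positivity)
        rw [← Real.exp_add, ← Real.exp_add, Real.exp_le_exp]
        have := exp_bound σ ρ m1 m2 y1 y2 hσ hρ1 hρ2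
        calc -(y1 - (m1 + ρ*σ*(y2-m2)))^2/(2*v) + -(y2-m2)^2/(2*1)
            ≤ -(y1-m1)^2/(4*σ^2) + -(y2-m2)^2/(2*(1+ρ^2)) := this
          _ = -(4*σ^2)⁻¹ * (y1 - m1)^2 + -(2*(1+ρ^2))⁻¹ * (y2 - m2)^2 := by
              field_simp
      have habs : |y1| ≤ |y1 - m1| + |m1| := by
        calc |y1| = |(y1 - m1) + m1| := by ring_nf
          _ ≤ |y1 - m1| + |m1| := abs_add_le _ _
      rw [norm_eq_abs, abs_mul, abs_mul,
        abs_of_nonneg (gpdf_nonneg _ hv _), abs_of_nonneg (gpdf_nonneg _ one_pos _),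
        mul_assoc]
      calc |y1| * (gpdf (m1 + ρ * σ * (y2 - m2)) v y1 * gpdf m2 1 y2)
          ≤ (|y1 - m1| + |m1|) * (Kv * K1 * (Real.exp (-(4*σ^2)⁻¹ * (y1 - m1)^2)
              * Real.exp (-(2*(1+ρ^2))⁻¹ * (y2 - m2)^2))) := by
            refine mul_le_mul habs hprod ?_ (by positivity)
            exact mul_nonneg (gpdf_nonneg _ hv _) (gpdf_nonneg _ one_pos _)
        _ = Kv * K1 * ((|y1 - m1| + |m1|) * Real.exp (-(4*σ^2)⁻¹ * (y1 - m1)^2))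
              * Real.exp (-(2*(1+ρ^2))⁻¹ * (y2 - m2)^2) := by ring
    have hInt : Integrable (fun p : ℝ × ℝ =>
        p.1 * gpdf (m1 + ρ * σ * (p.2 - m2)) v p.1 * gpdf m2 1 p.2)
        ((volume : Measure ℝ).prod ((volume : Measure ℝ).restrict (Set.Ioi 0))) := by
      refine Integrable.mono' (hG.mul_prod hH) hcont.aestronglyMeasurable
        (ae_of_all _ hbound)
    rw [MeasureTheory.integral_integral_swap hInt]
    have hinner : ∀ y2 : ℝ,
        (∫ y1 : ℝ, y1 * gpdf (m1 + ρ * σ * (y2 - m2)) v y1 * gpdf m2 1 y2)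
        = (m1 + ρ * σ * (y2 - m2)) * gpdf m2 1 y2 := by
      intro y2
      rw [integral_mul_const, gpdf_mean _ hv]
    simp_rw [← hvdef, hinner]
    have hsplit : ∀ y2 : ℝ, (m1 + ρ * σ * (y2 - m2)) * gpdf m2 1 y2
        = m1 * gpdf m2 1 y2 + ρ * σ * ((y2 - m2) * gpdf m2 1 y2) := fun y2 => by ring
    simp_rw [hsplit]
    have hi1 : IntegrableOn (fun y2 : ℝ => m1 * gpdf m2 1 y2) (Set.Ioi 0) :=
      ((gpdf_integrable m2 one_pos).const_mul m1).restrict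
    have hi2 : IntegrableOn (fun y2 : ℝ => ρ * σ * ((y2 - m2) * gpdf m2 1 y2)) (Set.Ioi 0) := by
      have ha := integrable_mul_gpdf m2 one_pos
      have hb := (gpdf_integrable m2 one_pos).const_mul m2
      have : Integrable (fun y2 : ℝ => (y2 - m2) * gpdf m2 1 y2) := by
        refine (ha.sub hb).congr (Eventually.of_forall fun x => ?_)
        simp only [Pi.sub_apply]; ring
      exact (this.const_mul _).restrict
    rw [integral_add hi1 hi2, integral_const_mul, integral_const_mul, outer1, outer2]
  refine ⟨hmain, ?_⟩
  have hcdf : 0 < stdNormalCdf m2 := by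
    rw [stdNormalCdf]
    rw [setIntegral_pos_iff_support_of_nonneg_ae ?_ ?_]
    · have hsupp : Function.support stdNormalPdf = Set.univ := by
        refine Set.eq_univ_iff_forall.mpr fun x => ?_
        rw [Function.mem_support]
        have : 0 < stdNormalPdf x := by simp only [stdNormalPdf]; positivity
        exact this.ne'
      rw [hsupp, Set.univ_inter, Real.volume_Iic]
      exact ENNReal.zero_lt_top
    · refine ae_of_all _ fun x => ?_
      simp only [stdNormalPdf]; positivity
    · exact stdNormalPdf_integrable.restrict
  rw [hmain]
  field_simp
end
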